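/- arXiv:2302.08190 — 6 statements merged into one kernel-verified Lean document; each statement's English description precedes it below -/
import Mathlib

section
/- Fix a finite state space X, a finite action space A, a horizon N ≥ 1, probability transition kernels p_n(·|x,a) ∈ Δ_X for 1 ≤ n ≤ N and (x,a) ∈ X×A, and an initial distribution μ0 ∈ Δ_{X×A}. Then the map π ↦ μ^π from policy sequences to state-action distribution sequences is a surjection onto M_{μ0}: for every μ ∈ M_{μ0} there exists a policy sequence π = (π_n)_{1≤n≤N} with μ^π_n = μ_n for all 0 ≤ n ≤ N. -/
open Finset

/-- A probability distribution on a finite type, viewed as a nonnegative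
function summing to one. -/
def IsDist {S : Type*} [Fintype S] (μ : S → ℝ) : Prop :=
  (∀ z, 0 ≤ μ z) ∧ ∑ z, μ z = 1

/-- The state-action distribution sequence induced by a policy sequence `π`
from the initial distribution `μ0`, with transition kernels `p`:
`μ^π_0 = μ0` and
`μ^π_{n+1}(x',a') = Σ_{x,a} μ^π_n(x,a) p_{n+1}(x'|x,a) π_{n+1}(a'|x')`. -/
noncomputable def induced {X A : Type*} [Fintype X] [Fintype A]
    (μ0 : X × A → ℝ) (p : ℕ → X → A → X → ℝ) (π : ℕ → X → A → ℝ) :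
    ℕ → X × A → ℝ
  | 0 => μ0
  | n + 1 => fun y =>
      ∑ z : X × A, induced μ0 p π n z * p (n + 1) z.1 z.2 y.1 * π (n + 1) y.1 y.2

/-- The map `π ↦ μ^π` is a surjection onto `M_{μ0}`: every kernel-consistent
sequence of state-action distributions starting at `μ0` is induced by some
policy sequence. -/
theorem surjection_onto_M {X A : Type*} [Fintype X] [Fintype A]
    [Nonempty X] [Nonempty A]
    (N : ℕ) (hN : 1 ≤ N)
    (p : ℕ → X → A → X → ℝ)
    (hp : ∀ n, 1 ≤ n → n ≤ N → ∀ x a, IsDist (fun x' => p n x a x'))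
    (μ0 : X × A → ℝ) (hμ0 : IsDist μ0)
    (μ : ℕ → X × A → ℝ)
    (hsimp : ∀ n ≤ N, IsDist (μ n))
    (hinit : μ 0 = μ0)
    (hcons : ∀ n < N, ∀ x' : X,
      ∑ a' : A, μ (n + 1) (x', a') = ∑ z : X × A, p (n + 1) z.1 z.2 x' * μ n z) :
    ∃ π : ℕ → X → A → ℝ,
      (∀ n x, 1 ≤ n → n ≤ N → IsDist (π n x)) ∧
      ∀ n ≤ N, induced μ0 p π n = μ n := by
  classical
  set π : ℕ → X → A → ℝ := fun n x a =>
    if 0 < ∑ a', μ n (x, a') then μ n (x, a) / ∑ a', μ n (x, a')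
    else (Fintype.card A : ℝ)⁻¹ with hπ
  refine ⟨π, ?_, ?_⟩
  · intro n x h1 hn
    constructor
    · intro a
      simp only [hπ]
      split_ifs with h
      · exact div_nonneg ((hsimp n hn).1 _) h.le
      · positivity
    · by_cases h : 0 < ∑ a', μ n (x, a')
      · simp only [hπ, if_pos h]
        rw [← Finset.sum_div, div_self h.ne']
      · simp only [hπ, if_neg h]
        rw [Finset.sum_const, nsmul_eq_mul]
        have : (Fintype.card A : ℝ) ≠ 0 :=
          Nat.cast_ne_zero.mpr (Fintype.card_ne_zero (α := A))
        simp [Finset.card_univ, mul_inv_cancel₀ this]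
  · intro n hn
    induction n with
    | zero => simp [induced, hinit]
    | succ n ih =>
      have hnN : n < N := hn
      have ih' := ih hnN.le
      funext y
      obtain ⟨x', a'⟩ := y
      show (∑ z : X × A, induced μ0 p π n z * p (n + 1) z.1 z.2 x' *
        π (n + 1) x' a') = μ (n + 1) (x', a')
      rw [ih']
      rw [← Finset.sum_mul]
      have hsum : (∑ z : X × A, μ n z * p (n + 1) z.1 z.2 x') =
          ∑ a'' : A, μ (n + 1) (x', a'') := by
        rw [hcons n hnN x']
        exact Finset.sum_congr rfl fun z _ => mul_comm _ _
      rw [hsum]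
      set s := ∑ a'' : A, μ (n + 1) (x', a'') with hs
      by_cases h : 0 < s
      · simp only [hπ, if_pos (show 0 < ∑ a', μ (n + 1) (x', a') from h)]
        rw [← hs]
        field_simp
      · have hs0 : s = 0 := le_antisymm (not_lt.mp h)
          (Finset.sum_nonneg fun a _ => (hsimp (n + 1) hn).1 _)
        have hz : μ (n + 1) (x', a') = 0 := by
          have := (Finset.sum_eq_zero_iff_of_nonneg
            (fun a _ => (hsimp (n + 1) hn).1 (x', a))).mp hs0 a' (Finset.mem_univ _)
          exact this
        rw [hs0, hz, zero_mul]
end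

section
/- Let π and π' be policy sequences with π'_n(a|x) > 0 for all n, x, a, and let μ = μ^π and μ' = μ^{π'} be the induced state-action distribution sequences from the same initial distribution μ0. Then the Kullback–Leibler divergence between the induced path distributions satisfies D(μ_{0:N}, μ'_{0:N}) = Σ_{n=1}^N Σ_{(x,a)∈X×A} μ_n(x,a) · log(π_n(a|x)/π'_n(a|x)). -/
open Finset

/-- The path distribution `μ^π_{0:N}` on `(X × A)^{N+1}`:
`μ^π_{0:N}(y_0,…,y_N) = μ0(y_0) ∏_{n=1}^N p_n(x_n|x_{n−1},a_{n−1}) π_n(a_n|x_n)`. -/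
noncomputable def pathDist {X A : Type*} [Fintype X] [Fintype A]
    (N : ℕ) (μ0 : X × A → ℝ) (p : ℕ → X → A → X → ℝ) (π : ℕ → X → A → ℝ)
    (y : Fin (N + 1) → X × A) : ℝ :=
  μ0 (y 0) * ∏ n : Fin N,
    (p ((n : ℕ) + 1) (y n.castSucc).1 (y n.castSucc).2 (y n.succ).1 *
      π ((n : ℕ) + 1) (y n.succ).1 (y n.succ).2)

/-- Kullback–Leibler divergence between two probability mass functions on a
finite type, with the convention `0 · log 0 = 0` (automatic in `ℝ`). -/
noncomputable def kl {S : Type*} [Fintype S] (η ν : S → ℝ) : ℝ :=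
  ∑ z, η z * Real.log (η z / ν z)

section aux

variable {X A : Type*} [Fintype X] [Fintype A]

lemma pathDist_snoc (N : ℕ) (μ0 : X × A → ℝ) (p : ℕ → X → A → X → ℝ)
    (π : ℕ → X → A → ℝ) (w : Fin (N + 1) → X × A) (z : X × A) :
    pathDist (N + 1) μ0 p π (Fin.snoc w z) =
      pathDist N μ0 p π w *
        (p (N + 1) (w (Fin.last N)).1 (w (Fin.last N)).2 z.1 *
          π (N + 1) z.1 z.2) := by
  unfold pathDist
  rw [Fin.prod_univ_castSucc]
  have h0 : (Fin.snoc w z : Fin (N + 2) → X × A) 0 = w 0 := by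
    have : (0 : Fin (N + 2)) = Fin.castSucc 0 := rfl
    rw [this, Fin.snoc_castSucc]
  rw [h0]
  have hlast : ∀ m : Fin (N + 1),
      (Fin.snoc w z : Fin (N + 2) → X × A) m.castSucc = w m := fun m =>
    Fin.snoc_castSucc ..
  have hterm : ∀ m : Fin N,
      (Fin.snoc w z : Fin (N + 2) → X × A) (m.castSucc).succ = w m.succ := by
    intro m
    rw [Fin.succ_castSucc, Fin.snoc_castSucc]
  have hsl : (Fin.snoc w z : Fin (N + 2) → X × A) (Fin.last N).succ = z := by
    have : (Fin.last N).succ = Fin.last (N + 1) := rfl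
    rw [this, Fin.snoc_last]
  simp only [hlast, hterm, hsl, Fin.coe_castSucc, Fin.val_last]
  ring

/-- sum over pi type via snoc -/
lemma sum_snoc {N : ℕ} (F : (Fin (N + 2) → X × A) → ℝ) :
    ∑ y : Fin (N + 2) → X × A, F y =
      ∑ z : X × A, ∑ w : Fin (N + 1) → X × A, F (Fin.snoc w z) := by
  rw [← Equiv.sum_comp (Fin.snocEquiv (fun _ => X × A)) F, Fintype.sum_prod_type]
  rfl

lemma marg (N : ℕ) (μ0 : X × A → ℝ) (p : ℕ → X → A → X → ℝ)
    (π : ℕ → X → A → ℝ)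
    (hπ : ∀ n x, 1 ≤ n → n ≤ N → IsDist (π n x)) (f : X × A → ℝ) :
    ∑ w : Fin (N + 1) → X × A, pathDist N μ0 p π w * f (w (Fin.last N)) =
      ∑ z : X × A, induced μ0 p π N z * f z := by
  induction N generalizing f with
  | zero =>
      rw [← Equiv.sum_comp (Equiv.funUnique (Fin 1) (X × A)).symm]
      simp [pathDist, induced, Equiv.funUnique]
  | succ N ih =>
      rw [sum_snoc]
      have ih' := ih (fun n x h1 h2 => hπ n x h1 (h2.trans (Nat.le_succ N)))
      calc ∑ z : X × A, ∑ w : Fin (N + 1) → X × A,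
            pathDist (N + 1) μ0 p π (Fin.snoc w z) * f ((Fin.snoc w z : Fin (N+2) → X × A) (Fin.last (N + 1)))
          = ∑ z : X × A, (∑ w : Fin (N + 1) → X × A,
              pathDist N μ0 p π w * p (N + 1) (w (Fin.last N)).1 (w (Fin.last N)).2 z.1) *
              (π (N + 1) z.1 z.2 * f z) := by
            refine Finset.sum_congr rfl fun z _ => ?_
            rw [Finset.sum_mul]
            refine Finset.sum_congr rfl fun w _ => ?_
            rw [pathDist_snoc, Fin.snoc_last]
            ring
        _ = ∑ z : X × A, induced μ0 p π (N + 1) z * f z := by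
            refine Finset.sum_congr rfl fun z _ => ?_
            rw [ih' (fun u => p (N + 1) u.1 u.2 z.1)]
            show (∑ u : X × A, induced μ0 p π N u * p (N + 1) u.1 u.2 z.1) *
              (π (N + 1) z.1 z.2 * f z) = _
            simp only [induced, Finset.sum_mul]
            exact Finset.sum_congr rfl fun u _ => by ring

lemma pathDist_ne_zero (N : ℕ) (μ0 : X × A → ℝ) (p : ℕ → X → A → X → ℝ)
    (π π' : ℕ → X → A → ℝ)
    (hπ'pos : ∀ n x a, 1 ≤ n → n ≤ N → 0 < π' n x a)
    (w : Fin (N + 1) → X × A) (hw : pathDist N μ0 p π w ≠ 0) :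
    pathDist N μ0 p π' w ≠ 0 := by
  unfold pathDist at hw ⊢
  rw [mul_ne_zero_iff] at hw ⊢
  refine ⟨hw.1, ?_⟩
  rw [Finset.prod_ne_zero_iff] at hw ⊢
  intro n _
  have := hw.2 n (Finset.mem_univ n)
  rw [mul_ne_zero_iff] at this
  exact mul_ne_zero this.1
    (ne_of_gt (hπ'pos _ _ _ (Nat.succ_le_succ (Nat.zero_le _)) (Nat.succ_le_of_lt n.isLt)))

lemma aux_main (N : ℕ)
    (p : ℕ → X → A → X → ℝ)
    (hp : ∀ n, 1 ≤ n → n ≤ N → ∀ x a, IsDist (fun x' => p n x a x'))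
    (μ0 : X × A → ℝ)
    (π π' : ℕ → X → A → ℝ)
    (hπ : ∀ n x, 1 ≤ n → n ≤ N → IsDist (π n x))
    (hπ' : ∀ n x, 1 ≤ n → n ≤ N → IsDist (π' n x))
    (hπ'pos : ∀ n x a, 1 ≤ n → n ≤ N → 0 < π' n x a) :
    kl (pathDist N μ0 p π) (pathDist N μ0 p π') =
      ∑ n ∈ Finset.Icc 1 N, ∑ z : X × A,
        induced μ0 p π n z * Real.log (π n z.1 z.2 / π' n z.1 z.2) := by
  induction N with
  | zero =>
      simp only [kl, pathDist, Finset.Icc_self]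
      rw [show Finset.Icc 1 0 = (∅ : Finset ℕ) by rfl, Finset.sum_empty]
      refine Finset.sum_eq_zero fun w _ => ?_
      simp only [Finset.univ_eq_empty, Finset.prod_empty, mul_one]
      by_cases h : μ0 (w 0) = 0
      · simp [h]
      · rw [div_self h, Real.log_one, mul_zero]
  | succ N ih =>
      have hb : ∀ n : ℕ, n ≤ N → n ≤ N + 1 := fun n h => h.trans (Nat.le_succ N)
      have hp' := fun n h1 h2 => hp n h1 (hb n h2)
      have hπ1 := fun n x h1 h2 => hπ n x h1 (hb n h2)
      have hπ'1 := fun n x h1 h2 => hπ' n x h1 (hb n h2)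
      have hπ'pos1 := fun n x a h1 h2 => hπ'pos n x a h1 (hb n h2)
      have ihN := ih hp' hπ1 hπ'1 hπ'pos1
      set P := pathDist N μ0 p π with hP
      set P' := pathDist N μ0 p π' with hP'
      have key : ∀ (w : Fin (N + 1) → X × A) (z : X × A),
          pathDist (N + 1) μ0 p π (Fin.snoc w z) *
            Real.log (pathDist (N + 1) μ0 p π (Fin.snoc w z) /
              pathDist (N + 1) μ0 p π' (Fin.snoc w z)) =
          P w * (p (N + 1) (w (Fin.last N)).1 (w (Fin.last N)).2 z.1 *
            π (N + 1) z.1 z.2) * Real.log (P w / P' w) +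
          P w * (p (N + 1) (w (Fin.last N)).1 (w (Fin.last N)).2 z.1 *
            π (N + 1) z.1 z.2) *
            Real.log (π (N + 1) z.1 z.2 / π' (N + 1) z.1 z.2) := by
        intro w z
        rw [pathDist_snoc, pathDist_snoc]
        set q := p (N + 1) (w (Fin.last N)).1 (w (Fin.last N)).2 z.1 with hq
        by_cases h : P w * (q * π (N + 1) z.1 z.2) = 0
        · rw [h]; ring
        · have hPw : P w ≠ 0 := fun h0 => h (by rw [h0]; ring)
          have hq0 : q ≠ 0 := fun h0 => h (by rw [h0]; ring)
          have hπz : π (N + 1) z.1 z.2 ≠ 0 := fun h0 => h (by rw [h0]; ring)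
          have hP'w : P' w ≠ 0 := pathDist_ne_zero N μ0 p π π' hπ'pos1 w hPw
          have hπ'z : π' (N + 1) z.1 z.2 ≠ 0 :=
            ne_of_gt (hπ'pos (N + 1) z.1 z.2 (Nat.le_add_left 1 N) le_rfl)
          have hratio : P w * (q * π (N + 1) z.1 z.2) /
              (P' w * (q * π' (N + 1) z.1 z.2)) =
              (P w / P' w) * (π (N + 1) z.1 z.2 / π' (N + 1) z.1 z.2) := by
            field_simp
          rw [hratio, Real.log_mul (div_ne_zero hPw hP'w) (div_ne_zero hπz hπ'z)]
          ring
      have hQsum : ∀ w : Fin (N + 1) → X × A,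
          ∑ z : X × A, p (N + 1) (w (Fin.last N)).1 (w (Fin.last N)).2 z.1 *
            π (N + 1) z.1 z.2 = 1 := by
        intro w
        rw [Fintype.sum_prod_type]
        have : ∀ x : X, ∑ a : A, p (N + 1) (w (Fin.last N)).1 (w (Fin.last N)).2 x *
            π (N + 1) x a = p (N + 1) (w (Fin.last N)).1 (w (Fin.last N)).2 x := by
          intro x
          rw [← Finset.mul_sum, (hπ (N + 1) x (Nat.le_add_left 1 N) le_rfl).2, mul_one]
        simp only [this]
        exact (hp (N + 1) (Nat.le_add_left 1 N) le_rfl _ _).2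
      have step : kl (pathDist (N + 1) μ0 p π) (pathDist (N + 1) μ0 p π') =
          kl P P' + ∑ z : X × A, induced μ0 p π (N + 1) z *
            Real.log (π (N + 1) z.1 z.2 / π' (N + 1) z.1 z.2) := by
        unfold kl
        rw [sum_snoc, Finset.sum_comm]
        have : ∀ w : Fin (N + 1) → X × A,
            ∑ z : X × A, pathDist (N + 1) μ0 p π (Fin.snoc w z) *
              Real.log (pathDist (N + 1) μ0 p π (Fin.snoc w z) /
                pathDist (N + 1) μ0 p π' (Fin.snoc w z)) =
            P w * Real.log (P w / P' w) +
            ∑ z : X × A, P w * (p (N + 1) (w (Fin.last N)).1 (w (Fin.last N)).2 z.1 *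
              π (N + 1) z.1 z.2) *
              Real.log (π (N + 1) z.1 z.2 / π' (N + 1) z.1 z.2) := by
          intro w
          simp only [key]
          rw [Finset.sum_add_distrib]
          congr 1
          have : ∑ z : X × A, P w * (p (N + 1) (w (Fin.last N)).1 (w (Fin.last N)).2 z.1 *
              π (N + 1) z.1 z.2) * Real.log (P w / P' w) =
              (P w * Real.log (P w / P' w)) *
              ∑ z : X × A, p (N + 1) (w (Fin.last N)).1 (w (Fin.last N)).2 z.1 *
                π (N + 1) z.1 z.2 := by
            rw [Finset.mul_sum]
            exact Finset.sum_congr rfl fun z _ => by ring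
          rw [this, hQsum w, mul_one]
        simp only [this]
        rw [Finset.sum_add_distrib]
        congr 1
        rw [Finset.sum_comm]
        refine Finset.sum_congr rfl fun z _ => ?_
        have := marg N μ0 p π hπ1
          (fun u => p (N + 1) u.1 u.2 z.1 * π (N + 1) z.1 z.2 *
            Real.log (π (N + 1) z.1 z.2 / π' (N + 1) z.1 z.2))
        calc ∑ w : Fin (N + 1) → X × A,
              P w * (p (N + 1) (w (Fin.last N)).1 (w (Fin.last N)).2 z.1 *
                π (N + 1) z.1 z.2) *
                Real.log (π (N + 1) z.1 z.2 / π' (N + 1) z.1 z.2)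
            = ∑ u : X × A, induced μ0 p π N u *
                (p (N + 1) u.1 u.2 z.1 * π (N + 1) z.1 z.2 *
                  Real.log (π (N + 1) z.1 z.2 / π' (N + 1) z.1 z.2)) := by
              rw [← this]
              exact Finset.sum_congr rfl fun w _ => by ring
          _ = induced μ0 p π (N + 1) z *
                Real.log (π (N + 1) z.1 z.2 / π' (N + 1) z.1 z.2) := by
              show _ = (∑ u : X × A, induced μ0 p π N u * p (N + 1) u.1 u.2 z.1 *
                π (N + 1) z.1 z.2) * _
              rw [Finset.sum_mul]
              exact Finset.sum_congr rfl fun u _ => by ring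
      rw [step, ihN, Finset.sum_Icc_succ_top (Nat.le_add_left 1 N)]

end aux

/-- Chain rule for the KL divergence between the path distributions of two
policy sequences: `D(μ_{0:N}, μ'_{0:N}) = Σ_{n=1}^N Σ_{x,a} μ_n(x,a)
log(π_n(a|x)/π'_n(a|x))`. -/
theorem kl_pathDist_eq_sum_policy_kl {X A : Type*} [Fintype X] [Fintype A]
    [Nonempty X] [Nonempty A]
    (N : ℕ) (hN : 1 ≤ N)
    (p : ℕ → X → A → X → ℝ)
    (hp : ∀ n, 1 ≤ n → n ≤ N → ∀ x a, IsDist (fun x' => p n x a x'))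
    (μ0 : X × A → ℝ) (hμ0 : IsDist μ0)
    (π π' : ℕ → X → A → ℝ)
    (hπ : ∀ n x, 1 ≤ n → n ≤ N → IsDist (π n x))
    (hπ' : ∀ n x, 1 ≤ n → n ≤ N → IsDist (π' n x))
    (hπ'pos : ∀ n x a, 1 ≤ n → n ≤ N → 0 < π' n x a) :
    kl (pathDist N μ0 p π) (pathDist N μ0 p π') =
      ∑ n ∈ Finset.Icc 1 N, ∑ z : X × A,
        induced μ0 p π n z * Real.log (π n z.1 z.2 / π' n z.1 z.2) := by
  exact aux_main N p hp μ0 π π' hπ hπ' hπ'pos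
end

section
/- Let μ and μ' be sequences in M_{μ0} induced by policy sequences π and π' respectively, with π'_n(a|x) > 0 for all n, x, a, and with state marginals ρ_n, ρ'_n. Define Γ(μ, μ') = Σ_{n=1}^N Σ_{(x,a)} μ_n(x,a) log(π_n(a|x)/π'_n(a|x)) and ψ(μ) = Σ_{n=1}^N [φ(μ_n) − φ(ρ_n)], where φ is the neg-entropy. Then Γ is the Bregman divergence induced by ψ: Γ(μ, μ') = ψ(μ) − ψ(μ') − ⟨∇ψ(μ'), μ − μ'⟩, where ⟨∇ψ(μ'), μ − μ'⟩ = Σ_{n=1}^N Σ_{(x,a)} log(μ'_n(x,a)/ρ'_n(x)) · (μ_n(x,a) − μ'_n(x,a)). -/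
open Finset

/-- The neg-entropy `φ(η) = Σ_z η(z) log η(z)`, with the convention
`0·log 0 = 0` (automatic in `ℝ`). -/
noncomputable def negEnt {S : Type*} [Fintype S] (η : S → ℝ) : ℝ :=
  ∑ z, η z * Real.log (η z)

lemma negEnt_factored {X A : Type*} [Fintype X] [Fintype A]
    (μ : X × A → ℝ) (q : X → A → ℝ)
    (hfac : ∀ z : X × A, μ z = (∑ a, μ (z.1, a)) * q z.1 z.2) :
    negEnt μ - negEnt (fun x : X => ∑ a, μ (x, a))
      = ∑ z : X × A, μ z * Real.log (q z.1 z.2) := by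
  have key : ∀ z : X × A, μ z * Real.log (μ z)
      = μ z * Real.log (∑ a, μ (z.1, a)) + μ z * Real.log (q z.1 z.2) := by
    intro z
    rcases eq_or_ne (∑ a, μ (z.1, a)) 0 with h | h
    · have h0 : μ z = 0 := by rw [hfac z, h, zero_mul]
      simp [h0]
    rcases eq_or_ne (q z.1 z.2) 0 with h' | h'
    · have h0 : μ z = 0 := by rw [hfac z, h', mul_zero]
      simp [h0]
    · nth_rewrite 1 [hfac z]
      rw [hfac z, Real.log_mul h h']
      ring
  unfold negEnt
  simp_rw [key, Finset.sum_add_distrib]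
  have h2 : (∑ z : X × A, μ z * Real.log (∑ a, μ (z.1, a)))
      = ∑ x : X, (∑ a, μ (x, a)) * Real.log (∑ a, μ (x, a)) := by
    rw [Fintype.sum_prod_type]
    exact Finset.sum_congr rfl fun x _ => by rw [Finset.sum_mul]
  rw [h2]; ring

/-- `Γ` is the Bregman divergence induced by
`ψ(μ) = Σ_{n=1}^N [φ(μ_n) − φ(ρ_n)]`:
`Γ(μ, μ') = ψ(μ) − ψ(μ') − ⟨∇ψ(μ'), μ − μ'⟩`, where `μ = μ^π`, `μ' = μ^{π'}`
are induced from the same initial distribution `μ0`, `ρ_n, ρ'_n` are their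
state marginals, and
`⟨∇ψ(μ'), μ − μ'⟩ = Σ_{n=1}^N Σ_{x,a} log(μ'_n(x,a)/ρ'_n(x))·(μ_n(x,a) − μ'_n(x,a))`. -/
theorem gamma_is_bregman {X A : Type*} [Fintype X] [Fintype A]
    [Nonempty X] [Nonempty A]
    (N : ℕ) (hN : 1 ≤ N)
    (p : ℕ → X → A → X → ℝ)
    (hp : ∀ n, 1 ≤ n → n ≤ N → ∀ x a, IsDist (fun x' => p n x a x'))
    (μ0 : X × A → ℝ) (hμ0 : IsDist μ0)
    (π π' : ℕ → X → A → ℝ)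
    (hπ : ∀ n x, 1 ≤ n → n ≤ N → IsDist (π n x))
    (hπ' : ∀ n x, 1 ≤ n → n ≤ N → IsDist (π' n x))
    (hπ'pos : ∀ n x a, 1 ≤ n → n ≤ N → 0 < π' n x a) :
    (∑ n ∈ Finset.Icc 1 N, ∑ z : X × A,
        induced μ0 p π n z * Real.log (π n z.1 z.2 / π' n z.1 z.2)) =
      (∑ n ∈ Finset.Icc 1 N,
          (negEnt (induced μ0 p π n) -
            negEnt (fun x : X => ∑ a : A, induced μ0 p π n (x, a)))) -
        (∑ n ∈ Finset.Icc 1 N,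
          (negEnt (induced μ0 p π' n) -
            negEnt (fun x : X => ∑ a : A, induced μ0 p π' n (x, a)))) -
        ∑ n ∈ Finset.Icc 1 N, ∑ z : X × A,
          Real.log (induced μ0 p π' n z / ∑ a : A, induced μ0 p π' n (z.1, a)) *
            (induced μ0 p π n z - induced μ0 p π' n z) := by
  -- nonnegativity of induced sequences
  have hnn : ∀ (q : ℕ → X → A → ℝ), (∀ n x, 1 ≤ n → n ≤ N → IsDist (q n x)) →
      ∀ n, n ≤ N → ∀ z, 0 ≤ induced μ0 p q n z := by
    intro q hq n
    induction n with
    | zero => exact fun _ z => hμ0.1 z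
    | succ m ih =>
      intro hm z
      apply Finset.sum_nonneg
      intro w _
      have hmN : m ≤ N := Nat.le_of_succ_le hm
      exact mul_nonneg (mul_nonneg (ih hmN w)
        ((hp (m+1) (Nat.succ_le_succ (Nat.zero_le m)) hm w.1 w.2).1 z.1))
        ((hq (m+1) z.1 (Nat.succ_le_succ (Nat.zero_le m)) hm).1 z.2)
  -- factorization μ_n(x,a) = ρ_n(x) * π_n(a|x)
  have hfac : ∀ (q : ℕ → X → A → ℝ), (∀ n x, 1 ≤ n → n ≤ N → IsDist (q n x)) →
      ∀ n, 1 ≤ n → n ≤ N → ∀ z : X × A,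
      induced μ0 p q n z = (∑ a', induced μ0 p q n (z.1, a')) * q n z.1 z.2 := by
    intro q hq n h1 h2 z
    obtain ⟨m, rfl⟩ : ∃ m, n = m + 1 := ⟨n - 1, (Nat.succ_pred_eq_of_pos h1).symm⟩
    show (∑ w : X × A, induced μ0 p q m w * p (m+1) w.1 w.2 z.1 * q (m+1) z.1 z.2)
       = (∑ a', ∑ w : X × A, induced μ0 p q m w * p (m+1) w.1 w.2 z.1 * q (m+1) z.1 a')
          * q (m+1) z.1 z.2
    rw [← Finset.sum_mul]
    congr 1
    have : ∀ a', (∑ w : X × A, induced μ0 p q m w * p (m+1) w.1 w.2 z.1 * q (m+1) z.1 a')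
        = (∑ w : X × A, induced μ0 p q m w * p (m+1) w.1 w.2 z.1) * q (m+1) z.1 a' := by
      intro a'; rw [Finset.sum_mul]
    simp_rw [this, ← Finset.mul_sum, (hq (m+1) z.1 (Nat.succ_le_succ (Nat.zero_le m)) h2).2,
      mul_one]
  -- support inclusion
  have hsupp : ∀ n, n ≤ N → ∀ z, induced μ0 p π' n z = 0 → induced μ0 p π n z = 0 := by
    intro n
    induction n with
    | zero => exact fun _ z h => h
    | succ m ih =>
      intro hm z hz
      have hmN : m ≤ N := Nat.le_of_succ_le hm
      have h1m : 1 ≤ m + 1 := Nat.succ_le_succ (Nat.zero_le m)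
      have hz' : ∀ w : X × A,
          induced μ0 p π' m w * p (m+1) w.1 w.2 z.1 * π' (m+1) z.1 z.2 = 0 := by
        have := (Finset.sum_eq_zero_iff_of_nonneg (fun w _ =>
          mul_nonneg (mul_nonneg (hnn π' hπ' m hmN w)
            ((hp (m+1) h1m hm w.1 w.2).1 z.1)) (hπ'pos (m+1) z.1 z.2 h1m hm).le)).mp hz
        exact fun w => this w (Finset.mem_univ w)
      show (∑ w : X × A, induced μ0 p π m w * p (m+1) w.1 w.2 z.1 * π (m+1) z.1 z.2) = 0
      apply Finset.sum_eq_zero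
      intro w _
      have hmp : induced μ0 p π' m w * p (m+1) w.1 w.2 z.1 = 0 := by
        have := hz' w
        rcases mul_eq_zero.mp this with h | h
        · exact h
        · exact absurd h (hπ'pos (m+1) z.1 z.2 h1m hm).ne'
      rcases mul_eq_zero.mp hmp with h | h
      · rw [ih hmN w h, zero_mul, zero_mul]
      · rw [h, mul_zero, zero_mul]
  -- per-n equality
  rw [← Finset.sum_sub_distrib, ← Finset.sum_sub_distrib]
  apply Finset.sum_congr rfl
  intro n hn
  obtain ⟨h1, h2⟩ := Finset.mem_Icc.mp hn
  have fπ := hfac π hπ n h1 h2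
  have fπ' := hfac π' hπ' n h1 h2
  have hA : negEnt (induced μ0 p π n) - negEnt (fun x : X => ∑ a, induced μ0 p π n (x, a))
      = ∑ z : X × A, induced μ0 p π n z * Real.log (π n z.1 z.2) :=
    negEnt_factored _ _ fπ
  have hA' : negEnt (induced μ0 p π' n) - negEnt (fun x : X => ∑ a, induced μ0 p π' n (x, a))
      = ∑ z : X × A, induced μ0 p π' n z * Real.log (π' n z.1 z.2) :=
    negEnt_factored _ _ fπ'
  have hB : ∀ z : X × A,
      Real.log (induced μ0 p π' n z / ∑ a, induced μ0 p π' n (z.1, a)) *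
        (induced μ0 p π n z - induced μ0 p π' n z)
      = Real.log (π' n z.1 z.2) * (induced μ0 p π n z - induced μ0 p π' n z) := by
    intro z
    have hr'nn : 0 ≤ ∑ a, induced μ0 p π' n (z.1, a) :=
      Finset.sum_nonneg fun a _ => hnn π' hπ' n h2 (z.1, a)
    rcases hr'nn.eq_or_lt with h0 | hpos
    · have hz' : induced μ0 p π' n z = 0 := by
        rw [fπ' z, ← h0, zero_mul]
      have hz : induced μ0 p π n z = 0 := hsupp n h2 z hz'
      rw [hz, hz', sub_zero, mul_zero, mul_zero]
    · rw [fπ' z, mul_div_cancel_left₀ _ hpos.ne']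
  rw [hA, hA']
  calc (∑ z : X × A, induced μ0 p π n z * Real.log (π n z.1 z.2 / π' n z.1 z.2))
      = ∑ z : X × A, (induced μ0 p π n z * Real.log (π n z.1 z.2)
          - induced μ0 p π' n z * Real.log (π' n z.1 z.2)
          - Real.log (π' n z.1 z.2) * (induced μ0 p π n z - induced μ0 p π' n z)) := by
        apply Finset.sum_congr rfl
        intro z _
        rcases eq_or_ne (π n z.1 z.2) 0 with hq0 | hq0
        · have hz : induced μ0 p π n z = 0 := by rw [fπ z, hq0, mul_zero]
          rw [hz, hq0]; ring
        · have hqpos : 0 < π n z.1 z.2 :=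
            lt_of_le_of_ne ((hπ n z.1 h1 h2).1 z.2) (Ne.symm hq0)
          rw [Real.log_div hqpos.ne' (hπ'pos n z.1 z.2 h1 h2).ne']
          ring
  _ = _ := by
        rw [Finset.sum_sub_distrib, Finset.sum_sub_distrib]
        congr 1
        exact Finset.sum_congr rfl fun z _ => (hB z).symm
end

section
/- Let μ and μ' be sequences in M_{μ0} induced by policy sequences π and π' respectively, with π'_n(a|x) > 0 for all n, x, a. Define Γ(μ, μ') = Σ_{n=1}^N Σ_{(x,a)} μ_n(x,a) log(π_n(a|x)/π'_n(a|x)). Then Γ is 1-strongly convex with respect to the norm sup_{1≤n≤N} ‖·‖₁, in the sense that Γ(μ, μ') ≥ (1/2) · sup_{1≤n≤N} ‖μ_n − μ'_n‖₁², where ‖μ_n − μ'_n‖₁ = Σ_{(x,a)} |μ_n(x,a) − μ'_n(x,a)|. -/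
open Finset

set_option linter.unusedSectionVars false

lemma log_sum_ineq {ι : Type*} (s : Finset ι) (a b : ι → ℝ)
    (ha : ∀ i ∈ s, 0 ≤ a i) (hb : ∀ i ∈ s, 0 ≤ b i)
    (hab : ∀ i ∈ s, b i = 0 → a i = 0) :
    (∑ i ∈ s, a i) * Real.log ((∑ i ∈ s, a i) / (∑ i ∈ s, b i)) ≤
      ∑ i ∈ s, a i * Real.log (a i / b i) := by
  set A := ∑ i ∈ s, a i with hA
  set B := ∑ i ∈ s, b i with hB
  rcases (Finset.sum_nonneg ha).eq_or_lt with h0 | hApos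
  · have hz : ∀ i ∈ s, a i = 0 :=
      (Finset.sum_eq_zero_iff_of_nonneg ha).mp h0.symm
    have : A = 0 := h0.symm
    rw [this, zero_mul]
    apply Finset.sum_nonneg
    intro i hi
    rw [hz i hi, zero_mul]
  · have hBpos : 0 < B := by
      rcases (Finset.sum_nonneg hb).eq_or_lt with hb0 | h
      · exfalso
        have hbz : ∀ i ∈ s, b i = 0 :=
          (Finset.sum_eq_zero_iff_of_nonneg hb).mp hb0.symm
        have : A = 0 := Finset.sum_eq_zero (fun i hi => hab i hi (hbz i hi))
        exact absurd this (ne_of_gt hApos)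
      · exact h
    have key : ∀ i ∈ s,
        a i * Real.log (A / B) + (a i - b i * (A / B)) ≤ a i * Real.log (a i / b i) := by
      intro i hi
      rcases (ha i hi).eq_or_lt with h0 | hapos
      · rw [← h0]
        have : 0 ≤ b i * (A / B) :=
          mul_nonneg (hb i hi) (div_nonneg hApos.le hBpos.le)
        simp
        linarith
      · have hbpos : 0 < b i := by
          rcases (hb i hi).eq_or_lt with hb0 | h
          · exact absurd (hab i hi hb0.symm) (ne_of_gt hapos)
          · exact h
        have h1 : Real.log ((b i * A) / (a i * B)) ≤ (b i * A) / (a i * B) - 1 :=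
          Real.log_le_sub_one_of_pos (by positivity)
        have h2 : Real.log ((b i * A) / (a i * B)) =
            Real.log (A / B) - Real.log (a i / b i) := by
          rw [Real.log_div (by positivity) (by positivity),
            Real.log_div (ne_of_gt hApos) (ne_of_gt hBpos),
            Real.log_div (ne_of_gt hapos) (ne_of_gt hbpos),
            Real.log_mul (ne_of_gt hbpos) (ne_of_gt hApos),
            Real.log_mul (ne_of_gt hapos) (ne_of_gt hBpos)]
          ring
        rw [h2] at h1
        have h3 := mul_le_mul_of_nonneg_left h1 hapos.le
        have h4 : a i * ((b i * A) / (a i * B)) = b i * (A / B) := by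
          field_simp
        nlinarith [h3, h4]
    calc A * Real.log (A / B)
        = ∑ i ∈ s, (a i * Real.log (A / B) + (a i - b i * (A / B))) := by
          rw [Finset.sum_add_distrib, Finset.sum_sub_distrib, ← Finset.sum_mul,
            ← Finset.sum_mul, ← hA, ← hB]
          have hBne : B ≠ 0 := ne_of_gt hBpos
          have hcan : B * (A / B) = A := by
            rw [mul_comm]; exact div_mul_cancel₀ A hBne
          rw [hcan]
          ring
      _ ≤ ∑ i ∈ s, a i * Real.log (a i / b i) := Finset.sum_le_sum key

/-- Derivative of the auxiliary function. -/
lemma H_hasDerivAt (a : ℝ) {x : ℝ} (hx0 : 0 < x) (hx1 : x < 1) :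
    HasDerivAt (fun y : ℝ => -(a * Real.log y) - (1 - a) * Real.log (1 - y) - 2 * (a - y) ^ 2)
      ((x - a) * (1 - 2 * x) ^ 2 / (x * (1 - x))) x := by
  have h1x : (1 : ℝ) - x ≠ 0 := by linarith
  have d1 : HasDerivAt (fun y : ℝ => -(a * Real.log y)) (-(a * x⁻¹)) x :=
    ((Real.hasDerivAt_log hx0.ne').const_mul a).neg
  have dinner : HasDerivAt (fun y : ℝ => 1 - y) (-1) x := by
    simpa using (hasDerivAt_id x).const_sub 1
  have d2 : HasDerivAt (fun y : ℝ => (1 - a) * Real.log (1 - y)) ((1 - a) * ((1 - x)⁻¹ * -1)) x := by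
    exact ((Real.hasDerivAt_log h1x).comp x dinner).const_mul (1 - a)
  have d3 : HasDerivAt (fun y : ℝ => 2 * (a - y) ^ 2)
      (2 * ((2 : ℕ) * (a - x) ^ 1 * -1)) x := by
    have : HasDerivAt (fun y : ℝ => a - y) (-1) x := by
      simpa using (hasDerivAt_id x).const_sub a
    exact (this.pow 2).const_mul 2
  have := (d1.sub d2).sub d3
  refine HasDerivAt.congr_deriv this ?_
  field_simp
  ring

lemma H_at_self (a : ℝ) :
    -(a * Real.log a) - (1 - a) * Real.log (1 - a) - 2 * (a - a) ^ 2
      = -(a * Real.log a) - (1 - a) * Real.log (1 - a) := by ring_nf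

/-- Binary Pinsker inequality. -/
lemma binary_pinsker (a b : ℝ) (ha0 : 0 ≤ a) (ha1 : a ≤ 1) (hb0 : 0 ≤ b) (hb1 : b ≤ 1)
    (h0 : b = 0 → a = 0) (h1 : b = 1 → a = 1) :
    2 * (a - b) ^ 2 ≤ a * Real.log (a / b) + (1 - a) * Real.log ((1 - a) / (1 - b)) := by
  rcases hb0.eq_or_lt with hb0' | hbpos
  · have ha' : a = 0 := h0 hb0'.symm
    subst ha'; rw [← hb0']; simp
  rcases hb1.eq_or_lt with hb1' | hblt
  · have ha' : a = 1 := h1 hb1'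
    subst ha'; rw [hb1']; simp
  -- now 0 < b < 1
  set H : ℝ → ℝ := fun y => -(a * Real.log y) - (1 - a) * Real.log (1 - y) - 2 * (a - y) ^ 2
    with hH
  have hsplit : a * Real.log (a / b) + (1 - a) * Real.log ((1 - a) / (1 - b)) - 2 * (a - b) ^ 2
      = H b - H a := by
    have e1 : a * Real.log (a / b) = a * Real.log a - a * Real.log b := by
      rcases ha0.eq_or_lt with h | h
      · rw [← h]; simp
      · rw [Real.log_div (ne_of_gt h) (ne_of_gt hbpos)]; ring
    have e2 : (1 - a) * Real.log ((1 - a) / (1 - b)) =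
        (1 - a) * Real.log (1 - a) - (1 - a) * Real.log (1 - b) := by
      rcases ha1.lt_or_eq with h | h
      · rw [Real.log_div (by linarith) (by linarith)]; ring
      · rw [h]; simp
    rw [e1, e2, hH]
    simp only
    ring
  rw [← sub_nonneg, hsplit]
  -- goal : 0 ≤ H b - H a
  have hmain : H a ≤ H b := by
    rcases le_total a b with hab | hab
    · -- monotone on [a, b]
      have hconv : Convex ℝ (Set.Icc a b) := convex_Icc a b
      have hint : interior (Set.Icc a b) = Set.Ioo a b := interior_Icc
      have hderiv : ∀ x ∈ Set.Ioo a b, HasDerivAt H ((x - a) * (1 - 2 * x) ^ 2 / (x * (1 - x))) x := by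
        intro x hx
        exact H_hasDerivAt a (lt_of_le_of_lt ha0 hx.1) (lt_trans hx.2 hblt)
      have hcont : ContinuousOn H (Set.Icc a b) := by
        rcases ha0.eq_or_lt with h | h
        · -- a = 0 : the log y term is identically zero
          have : H = fun y => -((1:ℝ) - a) * Real.log (1 - y) - 2 * (a - y) ^ 2 := by
            funext y; rw [hH]; simp only [← h]; ring_nf
          rw [this]
          apply ContinuousOn.sub
          · apply ContinuousOn.mul continuousOn_const
            apply ContinuousOn.log (by fun_prop)
            intro x hx
            have := hx.2
            have : x ≤ b := this
            have : x < 1 := lt_of_le_of_lt this hblt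
            linarith
          · fun_prop
        · apply ContinuousOn.sub
          apply ContinuousOn.sub
          · apply ContinuousOn.neg
            apply ContinuousOn.mul continuousOn_const
            apply ContinuousOn.log (by fun_prop)
            intro x hx
            have : 0 < x := lt_of_lt_of_le h hx.1
            exact ne_of_gt this
          · apply ContinuousOn.mul continuousOn_const
            apply ContinuousOn.log (by fun_prop)
            intro x hx
            have : x < 1 := lt_of_le_of_lt hx.2 hblt
            intro hc; rw [sub_eq_zero] at hc; exact absurd hc.symm (ne_of_lt this)
          · fun_prop
      have hmono : MonotoneOn H (Set.Icc a b) := by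
        apply monotoneOn_of_deriv_nonneg hconv hcont
        · rw [hint]
          intro x hx
          exact (hderiv x hx).differentiableAt.differentiableWithinAt
        · rw [hint]
          intro x hx
          rw [(hderiv x hx).deriv]
          have hx0 : 0 < x := lt_of_le_of_lt ha0 hx.1
          have hx1 : x < 1 := lt_trans hx.2 hblt
          apply div_nonneg
          · apply mul_nonneg (by linarith [hx.1]) (sq_nonneg _)
          · apply mul_nonneg hx0.le (by linarith)
      exact hmono (Set.left_mem_Icc.mpr hab) (Set.right_mem_Icc.mpr hab) hab
    · -- antitone on [b, a]
      have hconv : Convex ℝ (Set.Icc b a) := convex_Icc b a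
      have hint : interior (Set.Icc b a) = Set.Ioo b a := interior_Icc
      have hderiv : ∀ x ∈ Set.Ioo b a, HasDerivAt H ((x - a) * (1 - 2 * x) ^ 2 / (x * (1 - x))) x := by
        intro x hx
        exact H_hasDerivAt a (lt_trans hbpos hx.1) (lt_of_lt_of_le hx.2 ha1)
      have hcont : ContinuousOn H (Set.Icc b a) := by
        rcases ha1.lt_or_eq with h | h
        · apply ContinuousOn.sub
          apply ContinuousOn.sub
          · apply ContinuousOn.neg
            apply ContinuousOn.mul continuousOn_const
            apply ContinuousOn.log (by fun_prop)
            intro x hx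
            have : 0 < x := lt_of_lt_of_le hbpos hx.1
            exact ne_of_gt this
          · apply ContinuousOn.mul continuousOn_const
            apply ContinuousOn.log (by fun_prop)
            intro x hx
            have : x < 1 := lt_of_le_of_lt hx.2 h
            intro hc; rw [sub_eq_zero] at hc; exact absurd hc.symm (ne_of_lt this)
          · fun_prop
        · -- a = 1 : the log (1-y) term is identically zero
          have : H = fun y => -(a * Real.log y) - 2 * (a - y) ^ 2 := by
            funext y; rw [hH]; rw [← h]; ring_nf
          rw [this]
          apply ContinuousOn.sub
          · apply ContinuousOn.neg
            apply ContinuousOn.mul continuousOn_const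
            apply ContinuousOn.log (by fun_prop)
            intro x hx
            have : 0 < x := lt_of_lt_of_le hbpos hx.1
            exact ne_of_gt this
          · fun_prop
      have hanti : AntitoneOn H (Set.Icc b a) := by
        apply antitoneOn_of_deriv_nonpos hconv hcont
        · rw [hint]
          intro x hx
          exact (hderiv x hx).differentiableAt.differentiableWithinAt
        · rw [hint]
          intro x hx
          rw [(hderiv x hx).deriv]
          have hx0 : 0 < x := lt_trans hbpos hx.1
          have hx1 : x < 1 := lt_of_lt_of_le hx.2 ha1
          apply div_nonpos_of_nonpos_of_nonneg
          · apply mul_nonpos_of_nonpos_of_nonneg (by linarith [hx.2]) (sq_nonneg _)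
          · apply mul_nonneg hx0.le (by linarith)
      exact hanti (Set.left_mem_Icc.mpr hab) (Set.right_mem_Icc.mpr hab) hab
  -- H a = 0? No: just use hmain
  linarith [hmain]

lemma pinsker {S : Type*} [Fintype S] (P Q : S → ℝ) (hP : IsDist P) (hQ : IsDist Q)
    (hac : ∀ z, Q z = 0 → P z = 0) :
    (1 / 2) * (∑ z, |P z - Q z|) ^ 2 ≤ ∑ z, P z * Real.log (P z / Q z) := by
  classical
  set E : Finset S := Finset.univ.filter (fun z => Q z ≤ P z) with hE
  set Ec : Finset S := Finset.univ.filter (fun z => ¬ Q z ≤ P z) with hEc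
  set a : ℝ := ∑ z ∈ E, P z with ha
  set b : ℝ := ∑ z ∈ E, Q z with hb
  have hPsplit : a + ∑ z ∈ Ec, P z = 1 := by
    rw [ha, hEc, hE, Finset.sum_filter_add_sum_filter_not]; exact hP.2
  have hQsplit : b + ∑ z ∈ Ec, Q z = 1 := by
    rw [hb, hEc, hE, Finset.sum_filter_add_sum_filter_not]; exact hQ.2
  have hPc : ∑ z ∈ Ec, P z = 1 - a := by linarith
  have hQc : ∑ z ∈ Ec, Q z = 1 - b := by linarith
  -- L1 norm = 2 (a - b)
  have hnorm : ∑ z, |P z - Q z| = 2 * (a - b) := by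
    rw [← Finset.sum_filter_add_sum_filter_not Finset.univ (fun z => Q z ≤ P z)]
    have e1 : ∑ z ∈ Finset.univ.filter (fun z => Q z ≤ P z), |P z - Q z|
        = ∑ z ∈ E, (P z - Q z) := by
      apply Finset.sum_congr rfl
      intro z hz
      rw [Finset.mem_filter] at hz
      exact abs_of_nonneg (by linarith [hz.2])
    have e2 : ∑ z ∈ Finset.univ.filter (fun z => ¬ Q z ≤ P z), |P z - Q z|
        = ∑ z ∈ Ec, (Q z - P z) := by
      apply Finset.sum_congr rfl
      intro z hz
      rw [Finset.mem_filter] at hz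
      push_neg at hz
      rw [abs_of_neg (by linarith [hz.2])]
      ring
    rw [e1, e2, Finset.sum_sub_distrib, Finset.sum_sub_distrib, hPc, hQc, ← ha, ← hb]
    ring
  -- bounds on a b
  have haE : 0 ≤ a := Finset.sum_nonneg (fun z _ => hP.1 z)
  have hbE : 0 ≤ b := Finset.sum_nonneg (fun z _ => hQ.1 z)
  have ha1 : a ≤ 1 := by
    have : 0 ≤ ∑ z ∈ Ec, P z := Finset.sum_nonneg (fun z _ => hP.1 z)
    linarith
  have hb1 : b ≤ 1 := by
    have : 0 ≤ ∑ z ∈ Ec, Q z := Finset.sum_nonneg (fun z _ => hQ.1 z)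
    linarith
  have h0 : b = 0 → a = 0 := by
    intro hb0
    have hz : ∀ z ∈ E, Q z = 0 :=
      (Finset.sum_eq_zero_iff_of_nonneg (fun z _ => hQ.1 z)).mp hb0
    exact Finset.sum_eq_zero (fun z hz' => hac z (hz z hz'))
  have h1 : b = 1 → a = 1 := by
    intro hb1'
    have : ∑ z ∈ Ec, Q z = 0 := by linarith
    have hz : ∀ z ∈ Ec, Q z = 0 :=
      (Finset.sum_eq_zero_iff_of_nonneg (fun z _ => hQ.1 z)).mp this
    have hPcz : ∑ z ∈ Ec, P z = 0 := by
      apply Finset.sum_eq_zero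
      intro z hz'
      exfalso
      have hq := hz z hz'
      rw [hEc, Finset.mem_filter] at hz'
      exact hz'.2 (hq ▸ hP.1 z)
    linarith
  -- KL lower bound via log-sum on E and Ec
  have hklE : a * Real.log (a / b) ≤ ∑ z ∈ E, P z * Real.log (P z / Q z) := by
    rw [ha, hb]
    exact log_sum_ineq E P Q (fun z _ => hP.1 z) (fun z _ => hQ.1 z) (fun z _ h => hac z h)
  have hklEc : (1 - a) * Real.log ((1 - a) / (1 - b)) ≤
      ∑ z ∈ Ec, P z * Real.log (P z / Q z) := by
    rw [← hPc, ← hQc]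
    exact log_sum_ineq Ec P Q (fun z _ => hP.1 z) (fun z _ => hQ.1 z) (fun z _ h => hac z h)
  have hkl : ∑ z, P z * Real.log (P z / Q z)
      = ∑ z ∈ E, P z * Real.log (P z / Q z) + ∑ z ∈ Ec, P z * Real.log (P z / Q z) := by
    rw [hE, hEc, Finset.sum_filter_add_sum_filter_not]
  have hbp := binary_pinsker a b haE ha1 hbE hb1 h0 h1
  rw [hnorm, hkl]
  nlinarith [hbp, hklE, hklEc]

section Markov

variable {X A : Type*} [Fintype X] [Fintype A]

lemma induced_succ (μ0 : X × A → ℝ) (p : ℕ → X → A → X → ℝ) (π : ℕ → X → A → ℝ)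
    (n : ℕ) (y : X × A) :
    induced μ0 p π (n + 1) y =
      (∑ z : X × A, induced μ0 p π n z * p (n + 1) z.1 z.2 y.1) * π (n + 1) y.1 y.2 := by
  simp [induced, Finset.sum_mul]

variable (N : ℕ)
    (p : ℕ → X → A → X → ℝ)
    (hp : ∀ n, 1 ≤ n → n ≤ N → ∀ x a, IsDist (fun x' => p n x a x'))
    (μ0 : X × A → ℝ) (hμ0 : IsDist μ0)
    (π : ℕ → X → A → ℝ)
    (hπ : ∀ n x, 1 ≤ n → n ≤ N → IsDist (π n x))

include hp hμ0 hπ in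
lemma induced_nonneg : ∀ n, n ≤ N → ∀ z, 0 ≤ induced μ0 p π n z := by
  intro n
  induction n with
  | zero => intro _ z; exact hμ0.1 z
  | succ n ih =>
    intro hn y
    rw [induced_succ]
    apply mul_nonneg
    · apply Finset.sum_nonneg
      intro z _
      exact mul_nonneg (ih (by omega) z) ((hp (n + 1) (by omega) hn z.1 z.2).1 y.1)
    · exact (hπ (n + 1) y.1 (by omega) hn).1 y.2

include hp hμ0 hπ in
lemma induced_sum_one : ∀ n, n ≤ N → ∑ z : X × A, induced μ0 p π n z = 1 := by
  intro n
  induction n with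
  | zero => intro _; exact hμ0.2
  | succ n ih =>
    intro hn
    have e1 : ∑ y : X × A, induced μ0 p π (n + 1) y =
        ∑ x : X, ∑ a : A, (∑ z : X × A, induced μ0 p π n z * p (n + 1) z.1 z.2 x)
          * π (n + 1) x a := by
      rw [Fintype.sum_prod_type]
      apply Finset.sum_congr rfl
      intro x _
      apply Finset.sum_congr rfl
      intro a _
      exact induced_succ μ0 p π n (x, a)
    rw [e1]
    have e2 : ∀ x : X, ∑ a : A, (∑ z : X × A, induced μ0 p π n z * p (n + 1) z.1 z.2 x)
        * π (n + 1) x a = ∑ z : X × A, induced μ0 p π n z * p (n + 1) z.1 z.2 x := by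
      intro x
      rw [← Finset.mul_sum, (hπ (n + 1) x (by omega) hn).2, mul_one]
    rw [Finset.sum_congr rfl (fun x _ => e2 x), Finset.sum_comm]
    have e3 : ∀ z : X × A, ∑ x : X, induced μ0 p π n z * p (n + 1) z.1 z.2 x
        = induced μ0 p π n z := by
      intro z
      rw [← Finset.mul_sum, (hp (n + 1) (by omega) hn z.1 z.2).2, mul_one]
    rw [Finset.sum_congr rfl (fun z _ => e3 z)]
    exact ih (by omega)

variable (π' : ℕ → X → A → ℝ)
    (hπ' : ∀ n x, 1 ≤ n → n ≤ N → IsDist (π' n x))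
    (hπ'pos : ∀ n x a, 1 ≤ n → n ≤ N → 0 < π' n x a)

include hp hμ0 hπ hπ' hπ'pos in
lemma induced_ac : ∀ n, n ≤ N → ∀ z, induced μ0 p π' n z = 0 → induced μ0 p π n z = 0 := by
  intro n
  induction n with
  | zero => intro _ z h; exact h
  | succ n ih =>
    intro hn y h
    rw [induced_succ] at h
    have hπ'y := hπ'pos (n + 1) y.1 y.2 (by omega) hn
    have hν' : ∑ z : X × A, induced μ0 p π' n z * p (n + 1) z.1 z.2 y.1 = 0 := by
      rcases mul_eq_zero.mp h with h' | h'
      · exact h'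
      · exact absurd h' (ne_of_gt hπ'y)
    have hterms : ∀ z : X × A, z ∈ Finset.univ →
        induced μ0 p π' n z * p (n + 1) z.1 z.2 y.1 = 0 :=
      (Finset.sum_eq_zero_iff_of_nonneg (fun z _ =>
        mul_nonneg (induced_nonneg N p hp μ0 hμ0 π' hπ' n (by omega) z)
          ((hp (n + 1) (by omega) hn z.1 z.2).1 y.1))).mp hν'
    rw [induced_succ]
    rw [Finset.sum_eq_zero, zero_mul]
    intro z hz
    rcases mul_eq_zero.mp (hterms z hz) with h' | h'
    · rw [ih (by omega) z h', zero_mul]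
    · rw [h', mul_zero]


-- Γ term nonneg
include hp hμ0 hπ hπ' hπ'pos in
lemma gamma_term_nonneg : ∀ m, 1 ≤ m → m ≤ N →
    0 ≤ ∑ z : X × A, induced μ0 p π m z * Real.log (π m z.1 z.2 / π' m z.1 z.2) := by
  intro m h1 h2
  obtain ⟨k, rfl⟩ : ∃ k, m = k + 1 := ⟨m - 1, by omega⟩
  have e1 : ∑ z : X × A, induced μ0 p π (k + 1) z * Real.log (π (k + 1) z.1 z.2 / π' (k + 1) z.1 z.2)
      = ∑ x : X, (∑ z : X × A, induced μ0 p π k z * p (k + 1) z.1 z.2 x) *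
          (∑ a : A, π (k + 1) x a * Real.log (π (k + 1) x a / π' (k + 1) x a)) := by
    rw [Fintype.sum_prod_type]
    apply Finset.sum_congr rfl
    intro x _
    rw [Finset.mul_sum]
    apply Finset.sum_congr rfl
    intro a _
    rw [induced_succ μ0 p π k (x, a)]
    ring
  rw [e1]
  apply Finset.sum_nonneg
  intro x _
  apply mul_nonneg
  · apply Finset.sum_nonneg
    intro z _
    exact mul_nonneg (induced_nonneg N p hp μ0 hμ0 π hπ k (by omega) z)
      ((hp (k + 1) (by omega) h2 z.1 z.2).1 x)
  · have h := log_sum_ineq Finset.univ (fun a => π (k + 1) x a) (fun a => π' (k + 1) x a)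
      (fun a _ => (hπ (k + 1) x (by omega) h2).1 a)
      (fun a _ => (hπ' (k + 1) x (by omega) h2).1 a)
      (fun a _ hz => absurd hz (ne_of_gt (hπ'pos (k + 1) x a (by omega) h2)))
    rw [(hπ (k + 1) x (by omega) h2).2, (hπ' (k + 1) x (by omega) h2).2] at h
    simpa using h

-- chain rule + data processing inequality
include hp hμ0 hπ hπ' hπ'pos in
lemma chain_bound : ∀ n, n ≤ N →
    (∑ z : X × A, induced μ0 p π n z * Real.log (induced μ0 p π n z / induced μ0 p π' n z)) ≤
      ∑ m ∈ Finset.Icc 1 n, ∑ z : X × A,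
        induced μ0 p π m z * Real.log (π m z.1 z.2 / π' m z.1 z.2) := by
  intro n
  induction n with
  | zero =>
    intro _
    rw [Finset.Icc_eq_empty (by omega), Finset.sum_empty]
    apply le_of_eq
    apply Finset.sum_eq_zero
    intro z _
    show μ0 z * Real.log (μ0 z / μ0 z) = 0
    rcases (hμ0.1 z).eq_or_lt with h | h
    · rw [← h, zero_mul]
    · rw [div_self (ne_of_gt h), Real.log_one, mul_zero]
  | succ n ih =>
    intro hn
    set ν : X → ℝ := fun x => ∑ z : X × A, induced μ0 p π n z * p (n + 1) z.1 z.2 x with hν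
    set ν' : X → ℝ := fun x => ∑ z : X × A, induced μ0 p π' n z * p (n + 1) z.1 z.2 x with hν'
    have hac : ∀ z, induced μ0 p π' n z = 0 → induced μ0 p π n z = 0 :=
      induced_ac N p hp μ0 hμ0 π hπ π' hπ' hπ'pos n (by omega)
    have hνnn : ∀ x, 0 ≤ ν x := fun x => Finset.sum_nonneg (fun z _ =>
      mul_nonneg (induced_nonneg N p hp μ0 hμ0 π hπ n (by omega) z)
        ((hp (n + 1) (by omega) hn z.1 z.2).1 x))
    have hν'nn : ∀ x, 0 ≤ ν' x := fun x => Finset.sum_nonneg (fun z _ =>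
      mul_nonneg (induced_nonneg N p hp μ0 hμ0 π' hπ' n (by omega) z)
        ((hp (n + 1) (by omega) hn z.1 z.2).1 x))
    have hacν : ∀ x, ν' x = 0 → ν x = 0 := by
      intro x h
      have hterms := (Finset.sum_eq_zero_iff_of_nonneg (fun z (_ : z ∈ Finset.univ) =>
        mul_nonneg (induced_nonneg N p hp μ0 hμ0 π' hπ' n (by omega) z)
          ((hp (n + 1) (by omega) hn z.1 z.2).1 x))).mp h
      apply Finset.sum_eq_zero
      intro z hz
      rcases mul_eq_zero.mp (hterms z hz) with h' | h'
      · rw [hac z h', zero_mul]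
      · rw [show p (n + 1) z.1 z.2 x = 0 from h', mul_zero]
    have hνx : ∀ x, (∑ z : X × A, induced μ0 p π n z * p (n + 1) z.1 z.2 x) = ν x :=
      fun _ => rfl
    have hν'x : ∀ x, (∑ z : X × A, induced μ0 p π' n z * p (n + 1) z.1 z.2 x) = ν' x :=
      fun _ => rfl
    -- decomposition
    have hdecomp : ∑ z : X × A, induced μ0 p π (n + 1) z *
          Real.log (induced μ0 p π (n + 1) z / induced μ0 p π' (n + 1) z)
        = (∑ x : X, ν x * Real.log (ν x / ν' x)) +
          ∑ z : X × A, induced μ0 p π (n + 1) z * Real.log (π (n + 1) z.1 z.2 / π' (n + 1) z.1 z.2) := by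
      have key : ∀ y : X × A, induced μ0 p π (n + 1) y *
            Real.log (induced μ0 p π (n + 1) y / induced μ0 p π' (n + 1) y)
          = ν y.1 * π (n + 1) y.1 y.2 * Real.log (ν y.1 / ν' y.1) +
            induced μ0 p π (n + 1) y * Real.log (π (n + 1) y.1 y.2 / π' (n + 1) y.1 y.2) := by
        intro y
        rw [induced_succ μ0 p π n y, induced_succ μ0 p π' n y, hνx y.1, hν'x y.1]
        rcases (hνnn y.1).eq_or_lt with h | hνpos
        · rw [← h]; ring_nf
        rcases ((hπ (n + 1) y.1 (by omega) hn).1 y.2).eq_or_lt with h | hπpos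
        · rw [← h]; ring_nf
        have hν'pos : 0 < ν' y.1 := by
          rcases (hν'nn y.1).eq_or_lt with h | h
          · exact absurd (hacν y.1 h.symm) (ne_of_gt hνpos)
          · exact h
        have hπ'p := hπ'pos (n + 1) y.1 y.2 (by omega) hn
        have : Real.log ((ν y.1 * π (n + 1) y.1 y.2) / (ν' y.1 * π' (n + 1) y.1 y.2))
            = Real.log (ν y.1 / ν' y.1) + Real.log (π (n + 1) y.1 y.2 / π' (n + 1) y.1 y.2) := by
          rw [Real.log_div (by positivity) (by positivity),
            Real.log_div (ne_of_gt hνpos) (ne_of_gt hν'pos),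
            Real.log_div (ne_of_gt hπpos) (ne_of_gt hπ'p),
            Real.log_mul (ne_of_gt hνpos) (ne_of_gt hπpos),
            Real.log_mul (ne_of_gt hν'pos) (ne_of_gt hπ'p)]
          ring
        rw [this]
        ring
      rw [Finset.sum_congr rfl (fun y _ => key y), Finset.sum_add_distrib]
      congr 1
      rw [Fintype.sum_prod_type]
      apply Finset.sum_congr rfl
      intro x _
      have : ∑ a : A, ν x * π (n + 1) x a * Real.log (ν x / ν' x)
          = (ν x * Real.log (ν x / ν' x)) * ∑ a : A, π (n + 1) x a := by
        rw [Finset.mul_sum]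
        apply Finset.sum_congr rfl
        intro a _
        ring
      rw [this, (hπ (n + 1) x (by omega) hn).2, mul_one]
    -- data processing
    have hdp : (∑ x : X, ν x * Real.log (ν x / ν' x)) ≤
        ∑ z : X × A, induced μ0 p π n z * Real.log (induced μ0 p π n z / induced μ0 p π' n z) := by
      have h1 : ∀ x : X, ν x * Real.log (ν x / ν' x) ≤
          ∑ z : X × A, induced μ0 p π n z * p (n + 1) z.1 z.2 x *
            Real.log ((induced μ0 p π n z * p (n + 1) z.1 z.2 x) /
              (induced μ0 p π' n z * p (n + 1) z.1 z.2 x)) := by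
        intro x
        exact log_sum_ineq Finset.univ
          (fun z => induced μ0 p π n z * p (n + 1) z.1 z.2 x)
          (fun z => induced μ0 p π' n z * p (n + 1) z.1 z.2 x)
          (fun z _ => mul_nonneg (induced_nonneg N p hp μ0 hμ0 π hπ n (by omega) z)
            ((hp (n + 1) (by omega) hn z.1 z.2).1 x))
          (fun z _ => mul_nonneg (induced_nonneg N p hp μ0 hμ0 π' hπ' n (by omega) z)
            ((hp (n + 1) (by omega) hn z.1 z.2).1 x))
          (fun z _ h => by
            have h2 : induced μ0 p π' n z * p (n + 1) z.1 z.2 x = 0 := h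
            show induced μ0 p π n z * p (n + 1) z.1 z.2 x = 0
            rcases mul_eq_zero.mp h2 with h' | h'
            · rw [hac z h', zero_mul]
            · rw [h', mul_zero])
      calc ∑ x : X, ν x * Real.log (ν x / ν' x)
          ≤ ∑ x : X, ∑ z : X × A, induced μ0 p π n z * p (n + 1) z.1 z.2 x *
              Real.log ((induced μ0 p π n z * p (n + 1) z.1 z.2 x) /
                (induced μ0 p π' n z * p (n + 1) z.1 z.2 x)) :=
            Finset.sum_le_sum (fun x _ => h1 x)
        _ = ∑ z : X × A, ∑ x : X, induced μ0 p π n z * p (n + 1) z.1 z.2 x *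
              Real.log ((induced μ0 p π n z * p (n + 1) z.1 z.2 x) /
                (induced μ0 p π' n z * p (n + 1) z.1 z.2 x)) := Finset.sum_comm
        _ = ∑ z : X × A, induced μ0 p π n z * Real.log (induced μ0 p π n z / induced μ0 p π' n z) := by
            apply Finset.sum_congr rfl
            intro z _
            have e : ∀ x : X, induced μ0 p π n z * p (n + 1) z.1 z.2 x *
                Real.log ((induced μ0 p π n z * p (n + 1) z.1 z.2 x) /
                  (induced μ0 p π' n z * p (n + 1) z.1 z.2 x))
                = induced μ0 p π n z * p (n + 1) z.1 z.2 x *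
                  Real.log (induced μ0 p π n z / induced μ0 p π' n z) := by
              intro x
              rcases eq_or_ne (p (n + 1) z.1 z.2 x) 0 with h | h
              · rw [h, mul_zero, zero_mul, zero_mul]
              · rw [mul_div_mul_right _ _ h]
            rw [Finset.sum_congr rfl (fun x _ => e x)]
            have : ∑ x : X, induced μ0 p π n z * p (n + 1) z.1 z.2 x *
                Real.log (induced μ0 p π n z / induced μ0 p π' n z)
                = (induced μ0 p π n z * Real.log (induced μ0 p π n z / induced μ0 p π' n z)) *
                  ∑ x : X, p (n + 1) z.1 z.2 x := by
              rw [Finset.mul_sum]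
              apply Finset.sum_congr rfl
              intro x _
              ring
            rw [this, (hp (n + 1) (by omega) hn z.1 z.2).2, mul_one]
    rw [hdecomp, Finset.sum_Icc_succ_top (by omega : 1 ≤ n + 1)]
    have := ih (by omega)
    linarith

end Markov

/-- `Γ` is 1-strongly convex with respect to the norm `sup_{1 ≤ n ≤ N} ‖·‖₁`:
`Γ(μ^π, μ^{π'}) ≥ (1/2) ‖μ^π_n − μ^{π'}_n‖₁²` for every `1 ≤ n ≤ N` (hence for
the supremum over `n`). -/
theorem gamma_strongly_convex {X A : Type*} [Fintype X] [Fintype A]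
    [Nonempty X] [Nonempty A]
    (N : ℕ) (hN : 1 ≤ N)
    (p : ℕ → X → A → X → ℝ)
    (hp : ∀ n, 1 ≤ n → n ≤ N → ∀ x a, IsDist (fun x' => p n x a x'))
    (μ0 : X × A → ℝ) (hμ0 : IsDist μ0)
    (π π' : ℕ → X → A → ℝ)
    (hπ : ∀ n x, 1 ≤ n → n ≤ N → IsDist (π n x))
    (hπ' : ∀ n x, 1 ≤ n → n ≤ N → IsDist (π' n x))
    (hπ'pos : ∀ n x a, 1 ≤ n → n ≤ N → 0 < π' n x a) :
    ∀ n, 1 ≤ n → n ≤ N →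
      (1 / 2) * (∑ z : X × A, |induced μ0 p π n z - induced μ0 p π' n z|) ^ 2 ≤
        ∑ m ∈ Finset.Icc 1 N, ∑ z : X × A,
          induced μ0 p π m z * Real.log (π m z.1 z.2 / π' m z.1 z.2) := by
  intro n h1 h2
  have hPd : IsDist (induced μ0 p π n) :=
    ⟨induced_nonneg N p hp μ0 hμ0 π hπ n h2,
     induced_sum_one N p hp μ0 hμ0 π hπ n h2⟩
  have hQd : IsDist (induced μ0 p π' n) :=
    ⟨induced_nonneg N p hp μ0 hμ0 π' hπ' n h2,
     induced_sum_one N p hp μ0 hμ0 π' hπ' n h2⟩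
  have hac := induced_ac N p hp μ0 hμ0 π hπ π' hπ' hπ'pos n h2
  calc (1 / 2) * (∑ z : X × A, |induced μ0 p π n z - induced μ0 p π' n z|) ^ 2
      ≤ ∑ z : X × A, induced μ0 p π n z *
          Real.log (induced μ0 p π n z / induced μ0 p π' n z) :=
        pinsker _ _ hPd hQd hac
    _ ≤ ∑ m ∈ Finset.Icc 1 n, ∑ z : X × A,
          induced μ0 p π m z * Real.log (π m z.1 z.2 / π' m z.1 z.2) :=
        chain_bound N p hp μ0 hμ0 π hπ π' hπ' hπ'pos n h2
    _ ≤ ∑ m ∈ Finset.Icc 1 N, ∑ z : X × A,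
          induced μ0 p π m z * Real.log (π m z.1 z.2 / π' m z.1 z.2) := by
        apply Finset.sum_le_sum_of_subset_of_nonneg (Finset.Icc_subset_Icc_right h2)
        intro m hm _
        exact gamma_term_nonneg N p hp μ0 hμ0 π hπ π' hπ' hπ'pos m
          (Finset.mem_Icc.mp hm).1 (Finset.mem_Icc.mp hm).2
end

section
/- Let A be a finite nonempty set, Q : A → ℝ, τ > 0, and π^k ∈ Δ_A with π^k(a) > 0 for all a. Then the function π ↦ ⟨π, Q⟩ − (1/τ)·Σ_a π(a) log(π(a)/π^k(a)) on the simplex Δ_A attains its maximum uniquely at the distribution π* given by π*(a) = π^k(a)·exp(τ·Q(a)) / Σ_{a'} π^k(a')·exp(τ·Q(a')). -/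
open Finset

/-- The KL-regularized linear objective `π ↦ ⟨π, Q⟩ − (1/τ)·Σ_a π(a) log(π(a)/π^k(a))`
on the simplex `Δ_A` attains its maximum uniquely at the softmax distribution
`π*(a) = π^k(a)·exp(τ·Q(a)) / Σ_{a'} π^k(a')·exp(τ·Q(a'))`. -/
theorem softmax_unique_maximizer {A : Type*} [Fintype A] [Nonempty A]
    (Q : A → ℝ) (τ : ℝ) (hτ : 0 < τ)
    (πk : A → ℝ) (hπk : IsDist πk) (hπkpos : ∀ a, 0 < πk a)
    (πstar : A → ℝ)
    (hstar : πstar = fun a =>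
      πk a * Real.exp (τ * Q a) / ∑ a' : A, πk a' * Real.exp (τ * Q a')) :
    IsDist πstar ∧
      ∀ π : A → ℝ, IsDist π → π ≠ πstar →
        (∑ a, π a * Q a) - (1 / τ) * ∑ a, π a * Real.log (π a / πk a) <
          (∑ a, πstar a * Q a) -
            (1 / τ) * ∑ a, πstar a * Real.log (πstar a / πk a) := by
  set Z := ∑ a' : A, πk a' * Real.exp (τ * Q a') with hZdef
  have hZ : 0 < Z :=
    Finset.sum_pos (fun a _ => mul_pos (hπkpos a) (Real.exp_pos _)) univ_nonempty
  have hstarpos : ∀ a, 0 < πstar a := by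
    intro a; rw [hstar]
    exact div_pos (mul_pos (hπkpos a) (Real.exp_pos _)) hZ
  have hstardist : IsDist πstar := by
    refine ⟨fun a => (hstarpos a).le, ?_⟩
    rw [hstar]
    simp only
    rw [← Finset.sum_div, ← hZdef]
    exact div_self hZ.ne'
  refine ⟨hstardist, ?_⟩
  have key : ∀ π : A → ℝ, IsDist π →
      (∑ a, π a * Q a) - (1 / τ) * ∑ a, π a * Real.log (π a / πk a)
        = (1 / τ) * (Real.log Z - ∑ a, π a * Real.log (π a / πstar a)) := by
    intro π hπ
    have hterm : ∀ a ∈ univ, π a * Real.log (π a / πk a)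
        = π a * Real.log (π a / πstar a) + (τ * (π a * Q a) - π a * Real.log Z) := by
      intro a _
      rcases eq_or_lt_of_le (hπ.1 a) with h0 | hpos
      · simp [← h0]
      · have hk := hπkpos a
        have hs := hstarpos a
        have h1 : π a / πk a = (π a / πstar a) * (πstar a / πk a) := by
          field_simp
        have h2 : πstar a / πk a = Real.exp (τ * Q a) / Z := by
          rw [hstar]
          field_simp
        rw [h1, Real.log_mul (by positivity) (by positivity), h2,
          Real.log_div (Real.exp_pos _).ne' hZ.ne', Real.log_exp]
        ring
    rw [Finset.sum_congr rfl hterm, Finset.sum_add_distrib, Finset.sum_sub_distrib,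
      ← Finset.mul_sum, ← Finset.sum_mul, hπ.2]
    field_simp
    ring
  intro π hπ hne
  rw [key π hπ, key πstar hstardist]
  have hKLstar : ∑ a, πstar a * Real.log (πstar a / πstar a) = 0 := by
    apply Finset.sum_eq_zero
    intro a _
    rw [div_self (hstarpos a).ne']
    simp
  rw [hKLstar]
  have hle : ∀ a ∈ univ, π a - πstar a ≤ π a * Real.log (π a / πstar a) := by
    intro a _
    rcases eq_or_lt_of_le (hπ.1 a) with h0 | hpos
    · simp [← h0]; exact (hstarpos a).le
    · have hs := hstarpos a
      have hlog : Real.log (πstar a / π a) ≤ πstar a / π a - 1 :=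
        Real.log_le_sub_one_of_pos (by positivity)
      have hrev : Real.log (π a / πstar a) = - Real.log (πstar a / π a) := by
        rw [Real.log_div hpos.ne' hs.ne', Real.log_div hs.ne' hpos.ne']; ring
      rw [hrev]
      have := mul_le_mul_of_nonneg_left hlog hpos.le
      have heq : π a * (πstar a / π a - 1) = πstar a - π a := by field_simp
      nlinarith
  have hlt : ∃ a ∈ univ, π a - πstar a < π a * Real.log (π a / πstar a) := by
    obtain ⟨a, ha⟩ := Function.ne_iff.mp hne
    refine ⟨a, mem_univ a, ?_⟩
    rcases eq_or_lt_of_le (hπ.1 a) with h0 | hpos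
    · simp [← h0]; exact hstarpos a
    · have hs := hstarpos a
      have hne1 : πstar a / π a ≠ 1 := by
        intro h
        apply ha
        field_simp at h
        linarith
      have hlog : Real.log (πstar a / π a) < πstar a / π a - 1 :=
        Real.log_lt_sub_one_of_pos (by positivity) hne1
      have hrev : Real.log (π a / πstar a) = - Real.log (πstar a / π a) := by
        rw [Real.log_div hpos.ne' hs.ne', Real.log_div hs.ne' hpos.ne']; ring
      rw [hrev]
      have := mul_lt_mul_of_pos_left hlog hpos
      have heq : π a * (πstar a / π a - 1) = πstar a - π a := by field_simp
      nlinarith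
  have hKL : 0 < ∑ a, π a * Real.log (π a / πstar a) := by
    calc 0 = ∑ a, (π a - πstar a) := by
          rw [Finset.sum_sub_distrib, hπ.2, hstardist.2]; ring
    _ < _ := Finset.sum_lt_sum hle hlt
  have h1τ : 0 < 1 / τ := by positivity
  nlinarith
end

section
/- Fix finite sets X, A, horizon N ≥ 1, transition kernels p_n, initial distribution μ0 ∈ Δ_{X×A}, reward functions r_n : X×A → ℝ for 1 ≤ n ≤ N, a learning rate τ > 0, and a reference policy sequence π^k with π^k_n(a|x) > 0 for all n, x, a. Define Q̃_N(x,a) = r_N(x,a) and, backward for n = N−1,…,1, Q̃_n(x,a) = r_n(x,a) + max over π_{n+1} ∈ (Δ_A)^X of Σ_{x'} p_{n+1}(x'|x,a) Σ_{a'} π_{n+1}(a'|x') [ −(1/τ)·log(π_{n+1}(a'|x')/π^k_{n+1}(a'|x')) + Q̃_{n+1}(x',a') ]. Define the policy sequence π^{k+1} by π^{k+1}_n(a|x) = π^k_n(a|x)·exp(τ·Q̃_n(x,a)) / Σ_{a'} π^k_n(a'|x)·exp(τ·Q̃_n(x,a')). Then the induced sequence μ^{π^{k+1}} minimizes, over all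 μ^π ∈ M_{μ0}, the objective Σ_{n=1}^N ⟨−r_n, μ^π_n⟩ + (1/τ)·Γ(μ^π, μ^{π^k}), where Γ(μ^π, μ^{π^k}) = Σ_{n=1}^N Σ_{(x,a)} μ^π_n(x,a) log(π_n(a|x)/π^k_n(a|x)). -/
open Finset

/-- Backward recursion for the regularized `Q`-function, indexed by the number
of remaining steps `j = N − n`: `Qaux 0 = r_N` and
`Qaux (j+1) (x,a) = r_{N−(j+1)}(x,a) + max_{π' ∈ (Δ_A)^X} Σ_{x'} p_{N−j}(x'|x,a)
Σ_{a'} π'(a'|x') [ −(1/τ) log(π'(a'|x')/π^k_{N−j}(a'|x')) + Qaux j (x',a') ]`. -/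
noncomputable def Qaux {X A : Type*} [Fintype X] [Fintype A]
    (N : ℕ) (r : ℕ → X → A → ℝ) (p : ℕ → X → A → X → ℝ)
    (τ : ℝ) (πk : ℕ → X → A → ℝ) : ℕ → X → A → ℝ
  | 0 => r N
  | j + 1 => fun x a =>
      r (N - (j + 1)) x a +
        sSup { v : ℝ | ∃ π' : X → A → ℝ, (∀ x', IsDist (π' x')) ∧
          v = ∑ x', p (N - j) x a x' * ∑ a', π' x' a' *
            (-(1 / τ) * Real.log (π' x' a' / πk (N - j) x' a') +
              Qaux N r p τ πk j x' a') }

/-- The regularized `Q`-function `Q̃_n = Qaux (N − n)`, so that `Q̃_N = r_N` and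
`Q̃_n` satisfies the Bellman-type backward recursion of Theorem 1. -/
noncomputable def Qtil {X A : Type*} [Fintype X] [Fintype A]
    (N : ℕ) (r : ℕ → X → A → ℝ) (p : ℕ → X → A → X → ℝ)
    (τ : ℝ) (πk : ℕ → X → A → ℝ) (n : ℕ) : X → A → ℝ :=
  Qaux N r p τ πk (N - n)


/-! ### Auxiliary lemmas -/

lemma gibbs_le {A : Type*} [Fintype A] [Nonempty A] {τ : ℝ} (hτ : 0 < τ)
    (w : A → ℝ) (hw : ∀ a, 0 < w a) (f : A → ℝ) (q : A → ℝ) (hq : IsDist q) :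
    ∑ a, q a * (-(1 / τ) * Real.log (q a / w a) + f a)
      ≤ (1 / τ) * Real.log (∑ a, w a * Real.exp (τ * f a)) := by
  set g : A → ℝ := fun a => w a * Real.exp (τ * f a) with hg
  have hgpos : ∀ a, 0 < g a := fun a => mul_pos (hw a) (Real.exp_pos _)
  have hZ : 0 < ∑ a, g a := Finset.sum_pos (fun a _ => hgpos a) univ_nonempty
  have step1 : ∀ a, q a * (-(1 / τ) * Real.log (q a / w a) + f a)
      = (1 / τ) * (q a * Real.log (g a / q a)) := by
    intro a
    rcases eq_or_lt_of_le (hq.1 a) with h | h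
    · rw [← h]; ring
    · rw [Real.log_div (hgpos a).ne' h.ne', Real.log_div h.ne' (hw a).ne',
        Real.log_mul (hw a).ne' (Real.exp_pos _).ne', Real.log_exp]
      field_simp
      ring_nf
      try exact Or.inl trivial
  rw [Finset.sum_congr rfl (fun a _ => step1 a), ← Finset.mul_sum]
  apply mul_le_mul_of_nonneg_left _ (by positivity : (0:ℝ) ≤ 1 / τ)
  -- Gibbs: ∑ q log(g/q) ≤ log ∑ g
  have key : ∀ a, q a * Real.log (g a / q a) ≤ g a / (∑ a', g a') - q a
      + q a * Real.log (∑ a', g a') := by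
    intro a
    rcases eq_or_lt_of_le (hq.1 a) with h | h
    · rw [← h]; simp [le_of_lt, div_nonneg (hgpos a).le hZ.le]
    · have h1 : (0:ℝ) < g a / ((∑ a', g a') * q a) :=
        div_pos (hgpos a) (mul_pos hZ h)
      have := Real.log_le_sub_one_of_pos h1
      have h2 : Real.log (g a / ((∑ a', g a') * q a))
          = Real.log (g a / q a) - Real.log (∑ a', g a') := by
        rw [Real.log_div (hgpos a).ne' (mul_pos hZ h).ne',
          Real.log_div (hgpos a).ne' h.ne', Real.log_mul hZ.ne' h.ne']
        ring
      rw [h2] at this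
      have h3 : g a / ((∑ a', g a') * q a) = (g a / (∑ a', g a')) / q a := by
        ring
      rw [h3] at this
      have := mul_le_mul_of_nonneg_left this h.le
      rw [mul_sub, mul_sub, mul_div_cancel₀ _ h.ne'] at this
      linarith
  calc ∑ a, q a * Real.log (g a / q a)
      ≤ ∑ a, (g a / (∑ a', g a') - q a + q a * Real.log (∑ a', g a')) :=
        Finset.sum_le_sum (fun a _ => key a)
    _ = Real.log (∑ a', g a') := by
        rw [Finset.sum_add_distrib, Finset.sum_sub_distrib, ← Finset.sum_div,
          div_self hZ.ne', hq.2, ← Finset.sum_mul, hq.2]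
        ring

lemma gibbs_eq {A : Type*} [Fintype A] [Nonempty A] {τ : ℝ} (hτ : 0 < τ)
    (w : A → ℝ) (hw : ∀ a, 0 < w a) (f : A → ℝ) :
    ∑ a, (w a * Real.exp (τ * f a) / ∑ a', w a' * Real.exp (τ * f a')) *
      (-(1 / τ) * Real.log ((w a * Real.exp (τ * f a) /
          ∑ a', w a' * Real.exp (τ * f a')) / w a) + f a)
    = (1 / τ) * Real.log (∑ a', w a' * Real.exp (τ * f a')) := by
  set Z : ℝ := ∑ a', w a' * Real.exp (τ * f a') with hZdef
  have hZ : 0 < Z := Finset.sum_pos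
    (fun a _ => mul_pos (hw a) (Real.exp_pos _)) univ_nonempty
  have step : ∀ a, (w a * Real.exp (τ * f a) / Z) *
      (-(1 / τ) * Real.log ((w a * Real.exp (τ * f a) / Z) / w a) + f a)
      = (w a * Real.exp (τ * f a) / Z) * ((1 / τ) * Real.log Z) := by
    intro a
    have h1 : (w a * Real.exp (τ * f a) / Z) / w a = Real.exp (τ * f a) / Z := by
      rw [div_div, mul_comm Z (w a), ← div_div, mul_div_cancel_left₀ _ (hw a).ne']
    rw [h1, Real.log_div (Real.exp_pos _).ne' hZ.ne', Real.log_exp]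
    field_simp
    ring_nf
    try exact Or.inl trivial
  rw [Finset.sum_congr rfl (fun a _ => step a), ← Finset.sum_mul, ← Finset.sum_div,
    div_self hZ.ne', one_mul]

lemma softmax_isDist {A : Type*} [Fintype A] [Nonempty A] {τ : ℝ}
    (w : A → ℝ) (hw : ∀ a, 0 < w a) (f : A → ℝ) :
    IsDist (fun a => w a * Real.exp (τ * f a) / ∑ a', w a' * Real.exp (τ * f a')) := by
  have hZ : 0 < ∑ a', w a' * Real.exp (τ * f a') := Finset.sum_pos
    (fun a _ => mul_pos (hw a) (Real.exp_pos _)) univ_nonempty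
  constructor
  · intro a
    exact div_nonneg (mul_pos (hw a) (Real.exp_pos _)).le hZ.le
  · rw [← Finset.sum_div, div_self hZ.ne']


/-- The value function `V_n(x) = (1/τ) log Σ_a πk_n(a|x) e^{τ Q̃_n(x,a)}` for
`n ≤ N`, and `0` beyond the horizon. -/
noncomputable def Vfun {X A : Type*} [Fintype X] [Fintype A]
    (N : ℕ) (r : ℕ → X → A → ℝ) (p : ℕ → X → A → X → ℝ)
    (τ : ℝ) (πk : ℕ → X → A → ℝ) (n : ℕ) (x : X) : ℝ :=
  if n ≤ N then
    (1 / τ) * Real.log (∑ a, πk n x a * Real.exp (τ * Qtil N r p τ πk n x a))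
  else 0

lemma bellman {X A : Type*} [Fintype X] [Fintype A] [Nonempty X] [Nonempty A]
    {N : ℕ} {p : ℕ → X → A → X → ℝ}
    (hp : ∀ n, 1 ≤ n → n ≤ N → ∀ x a, IsDist (fun x' => p n x a x'))
    {r : ℕ → X → A → ℝ} {τ : ℝ} (hτ : 0 < τ) {πk : ℕ → X → A → ℝ}
    (hπkpos : ∀ n x a, 1 ≤ n → n ≤ N → 0 < πk n x a)
    (n : ℕ) (h1 : 1 ≤ n) (h2 : n ≤ N) (x : X) (a : A) :
    Qtil N r p τ πk n x a
      = r n x a + ∑ x', p (n + 1) x a x' * Vfun N r p τ πk (n + 1) x' := by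
  rcases eq_or_lt_of_le h2 with hEq | hlt
  · -- n = N
    subst hEq
    have hV : ∀ x', Vfun n r p τ πk (n + 1) x' = 0 := by
      intro x'; simp [Vfun]
    simp only [hV, mul_zero, Finset.sum_const_zero, add_zero]
    show Qaux n r p τ πk (n - n) x a = r n x a
    rw [Nat.sub_self]
    rfl
  · -- n < N
    set j : ℕ := N - n - 1 with hj
    have hNn : N - n = j + 1 := by omega
    have hj1 : N - (j + 1) = n := by omega
    have hj2 : N - j = n + 1 := by omega
    have hj3 : N - (n + 1) = j := by omega
    have hQ : ∀ x' a', Qaux N r p τ πk j x' a' = Qtil N r p τ πk (n + 1) x' a' := by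
      intro x' a'; rw [Qtil, hj3]
    show Qaux N r p τ πk (N - n) x a = _
    rw [hNn]
    show r (N - (j + 1)) x a + sSup _ = _
    rw [hj1]
    congr 1
    have hn1 : n + 1 ≤ N := hlt
    have hwpos : ∀ x' a', 0 < πk (n + 1) x' a' := fun x' a' =>
      hπkpos (n + 1) x' a' (by omega) hn1
    have hVdef : ∀ x', Vfun N r p τ πk (n + 1) x'
        = (1 / τ) * Real.log (∑ a', πk (n + 1) x' a' *
            Real.exp (τ * Qtil N r p τ πk (n + 1) x' a')) := by
      intro x'; rw [Vfun, if_pos hn1]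
    apply IsGreatest.csSup_eq
    constructor
    · -- membership : the softmax policy attains the value
      refine ⟨fun x' a' => πk (n + 1) x' a' * Real.exp (τ * Qtil N r p τ πk (n + 1) x' a') /
          ∑ a'', πk (n + 1) x' a'' * Real.exp (τ * Qtil N r p τ πk (n + 1) x' a''), ?_, ?_⟩
      · intro x'
        exact softmax_isDist _ (hwpos x') _
      · rw [hj2]
        refine Finset.sum_congr rfl fun x' _ => ?_
        rw [hVdef x']
        congr 1
        rw [← gibbs_eq hτ (πk (n + 1) x') (hwpos x') (Qtil N r p τ πk (n + 1) x')]
        exact Finset.sum_congr rfl fun a' _ => by rw [hQ]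
    · -- upper bound
      rintro v ⟨π', hπ', rfl⟩
      rw [hj2]
      refine Finset.sum_le_sum fun x' _ => ?_
      have hple := (hp (n + 1) (by omega) hn1 x a).1 x'
      refine mul_le_mul_of_nonneg_left ?_ hple
      rw [hVdef x']
      have := gibbs_le hτ (πk (n + 1) x') (hwpos x') (Qtil N r p τ πk (n + 1) x')
        (π' x') (hπ' x')
      refine le_trans (le_of_eq ?_) this
      exact Finset.sum_congr rfl fun a' _ => by rw [hQ]

lemma Vfun_le {X A : Type*} [Fintype X] [Fintype A] [Nonempty X] [Nonempty A]
    {N : ℕ} {p : ℕ → X → A → X → ℝ} {r : ℕ → X → A → ℝ} {τ : ℝ}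
    (hτ : 0 < τ) {πk : ℕ → X → A → ℝ}
    (hπkpos : ∀ n x a, 1 ≤ n → n ≤ N → 0 < πk n x a)
    (n : ℕ) (h1 : 1 ≤ n) (h2 : n ≤ N) (x : X) (q : A → ℝ) (hq : IsDist q) :
    ∑ a, q a * (-(1 / τ) * Real.log (q a / πk n x a) + Qtil N r p τ πk n x a)
      ≤ Vfun N r p τ πk n x := by
  rw [Vfun, if_pos h2]
  exact gibbs_le hτ (πk n x) (fun a => hπkpos n x a h1 h2) (Qtil N r p τ πk n x) q hq

lemma Vfun_eq {X A : Type*} [Fintype X] [Fintype A] [Nonempty X] [Nonempty A]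
    {N : ℕ} {p : ℕ → X → A → X → ℝ} {r : ℕ → X → A → ℝ} {τ : ℝ}
    (hτ : 0 < τ) {πk : ℕ → X → A → ℝ}
    (hπkpos : ∀ n x a, 1 ≤ n → n ≤ N → 0 < πk n x a)
    {πk1 : ℕ → X → A → ℝ}
    (hπk1 : πk1 = fun n x a =>
      πk n x a * Real.exp (τ * Qtil N r p τ πk n x a) /
        ∑ a' : A, πk n x a' * Real.exp (τ * Qtil N r p τ πk n x a'))
    (n : ℕ) (h1 : 1 ≤ n) (h2 : n ≤ N) (x : X) :
    ∑ a, πk1 n x a * (-(1 / τ) * Real.log (πk1 n x a / πk n x a)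
        + Qtil N r p τ πk n x a)
      = Vfun N r p τ πk n x := by
  subst hπk1
  rw [Vfun, if_pos h2]
  exact gibbs_eq hτ (πk n x) (fun a => hπkpos n x a h1 h2) (Qtil N r p τ πk n x)

lemma induced_nonneg_s9 {X A : Type*} [Fintype X] [Fintype A]
    {N : ℕ} {p : ℕ → X → A → X → ℝ}
    (hp : ∀ n, 1 ≤ n → n ≤ N → ∀ x a, IsDist (fun x' => p n x a x'))
    {μ0 : X × A → ℝ} (hμ0 : IsDist μ0)
    {π : ℕ → X → A → ℝ} (hπ : ∀ n x, 1 ≤ n → n ≤ N → IsDist (π n x)) :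
    ∀ n, n ≤ N → ∀ z, 0 ≤ induced μ0 p π n z := by
  intro n
  induction n with
  | zero => intro _ z; exact hμ0.1 z
  | succ m ih =>
    intro h z
    show 0 ≤ ∑ w : X × A, induced μ0 p π m w * p (m + 1) w.1 w.2 z.1 * π (m + 1) z.1 z.2
    refine Finset.sum_nonneg fun w _ => ?_
    exact mul_nonneg (mul_nonneg (ih (by omega) w)
      ((hp (m + 1) (by omega) h w.1 w.2).1 z.1))
      ((hπ (m + 1) z.1 (by omega) h).1 z.2)

/-- The key backward-induction inequality. -/
lemma tail_ge {X A : Type*} [Fintype X] [Fintype A] [Nonempty X] [Nonempty A]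
    {N : ℕ} {p : ℕ → X → A → X → ℝ}
    (hp : ∀ n, 1 ≤ n → n ≤ N → ∀ x a, IsDist (fun x' => p n x a x'))
    {μ0 : X × A → ℝ} (hμ0 : IsDist μ0)
    {r : ℕ → X → A → ℝ} {τ : ℝ} (hτ : 0 < τ) {πk : ℕ → X → A → ℝ}
    (hπkpos : ∀ n x a, 1 ≤ n → n ≤ N → 0 < πk n x a)
    {π : ℕ → X → A → ℝ} (hπ : ∀ n x, 1 ≤ n → n ≤ N → IsDist (π n x)) :
    ∀ d, d ≤ N →
      -∑ x, (∑ z : X × A, induced μ0 p π (N - d) z * p (N - d + 1) z.1 z.2 x) *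
          Vfun N r p τ πk (N - d + 1) x
        ≤ ∑ m ∈ Finset.Icc (N - d + 1) N, ∑ z : X × A, induced μ0 p π m z *
            (-(r m z.1 z.2) + (1 / τ) * Real.log (π m z.1 z.2 / πk m z.1 z.2)) := by
  intro d
  induction d with
  | zero =>
    intro _
    rw [Nat.sub_zero, Finset.Icc_eq_empty (by omega), Finset.sum_empty]
    have hV : ∀ x : X, Vfun N r p τ πk (N + 1) x = 0 := by
      intro x; rw [Vfun, if_neg (by omega)]
    simp [hV]
  | succ d ih =>
    intro hd
    set m : ℕ := N - (d + 1) with hm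
    have hm1 : m + 1 ≤ N := by omega
    have hNd : N - d = m + 1 := by omega
    have IH := ih (by omega)
    rw [hNd] at IH
    rw [Finset.Icc_eq_cons_Ioc (by omega : m + 1 ≤ N), Finset.sum_cons,
      ← Finset.Icc_add_one_left_eq_Ioc]
    set ν : X → ℝ := fun x => ∑ z : X × A, induced μ0 p π m z * p (m + 1) z.1 z.2 x
      with hν
    have hνnn : ∀ x, 0 ≤ ν x := by
      intro x
      refine Finset.sum_nonneg fun z _ => mul_nonneg
        (induced_nonneg_s9 hp hμ0 hπ m (by omega) z)
        ((hp (m + 1) (by omega) hm1 z.1 z.2).1 x)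
    have hμ1 : ∀ y : X × A, induced μ0 p π (m + 1) y = ν y.1 * π (m + 1) y.1 y.2 := by
      intro y
      show (∑ z : X × A, induced μ0 p π m z * p (m + 1) z.1 z.2 y.1 * π (m + 1) y.1 y.2)
        = _
      rw [hν, Finset.sum_mul]
    have hcost : ∑ z : X × A, induced μ0 p π (m + 1) z *
        (-(r (m + 1) z.1 z.2) + (1 / τ) * Real.log (π (m + 1) z.1 z.2 / πk (m + 1) z.1 z.2))
        = ∑ x, ν x * ∑ a, π (m + 1) x a *
            (-(r (m + 1) x a) + (1 / τ) * Real.log (π (m + 1) x a / πk (m + 1) x a)) := by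
      rw [Fintype.sum_prod_type]
      refine Finset.sum_congr rfl fun x _ => ?_
      rw [Finset.mul_sum]
      refine Finset.sum_congr rfl fun a _ => ?_
      rw [hμ1 (x, a)]
      ring
    have hnext : ∑ x', (∑ z : X × A, induced μ0 p π (m + 1) z * p (m + 1 + 1) z.1 z.2 x') *
        Vfun N r p τ πk (m + 1 + 1) x'
        = ∑ x, ν x * ∑ a, π (m + 1) x a *
            ∑ x', p (m + 2) x a x' * Vfun N r p τ πk (m + 2) x' := by
      have expand : ∀ x', (∑ z : X × A, induced μ0 p π (m + 1) z * p (m + 1 + 1) z.1 z.2 x')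
          = ∑ x, ∑ a, ν x * π (m + 1) x a * p (m + 2) x a x' := by
        intro x'
        rw [Fintype.sum_prod_type]
        refine Finset.sum_congr rfl fun x _ => Finset.sum_congr rfl fun a _ => ?_
        rw [hμ1 (x, a)]
      calc ∑ x', (∑ z : X × A, induced μ0 p π (m + 1) z * p (m + 1 + 1) z.1 z.2 x') *
            Vfun N r p τ πk (m + 1 + 1) x'
          = ∑ x', ∑ x, ∑ a, ν x * π (m + 1) x a * p (m + 2) x a x' *
              Vfun N r p τ πk (m + 2) x' := by
            refine Finset.sum_congr rfl fun x' _ => ?_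
            rw [expand x', Finset.sum_mul]
            exact Finset.sum_congr rfl fun x _ => by rw [Finset.sum_mul]
        _ = ∑ x, ν x * ∑ a, π (m + 1) x a *
              ∑ x', p (m + 2) x a x' * Vfun N r p τ πk (m + 2) x' := by
            rw [Finset.sum_comm]
            refine Finset.sum_congr rfl fun x _ => ?_
            rw [Finset.sum_comm, Finset.mul_sum]
            refine Finset.sum_congr rfl fun a _ => ?_
            rw [Finset.mul_sum, Finset.mul_sum]
            exact Finset.sum_congr rfl fun x' _ => by ring
    have key : ∀ x, -(ν x * Vfun N r p τ πk (m + 1) x)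
        ≤ ν x * ∑ a, π (m + 1) x a *
            (-(r (m + 1) x a) + (1 / τ) * Real.log (π (m + 1) x a / πk (m + 1) x a))
          - ν x * ∑ a, π (m + 1) x a *
            ∑ x', p (m + 2) x a x' * Vfun N r p τ πk (m + 2) x' := by
      intro x
      have hsum : ∑ a, π (m + 1) x a *
            (-(r (m + 1) x a) + (1 / τ) * Real.log (π (m + 1) x a / πk (m + 1) x a))
          - ∑ a, π (m + 1) x a * ∑ x', p (m + 2) x a x' * Vfun N r p τ πk (m + 2) x'
          = -∑ a, π (m + 1) x a * (-(1 / τ) *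
              Real.log (π (m + 1) x a / πk (m + 1) x a) + Qtil N r p τ πk (m + 1) x a) := by
        rw [← Finset.sum_sub_distrib, ← Finset.sum_neg_distrib]
        refine Finset.sum_congr rfl fun a _ => ?_
        rw [bellman hp hτ hπkpos (m + 1) (by omega) hm1 x a]
        ring
      have hg := Vfun_le (p := p) (r := r) hτ hπkpos (m + 1) (by omega) hm1 x
        (π (m + 1) x) (hπ (m + 1) x (by omega) hm1)
      have := mul_le_mul_of_nonneg_left hg (hνnn x)
      calc -(ν x * Vfun N r p τ πk (m + 1) x)
          ≤ -(ν x * ∑ a, π (m + 1) x a * (-(1 / τ) *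
              Real.log (π (m + 1) x a / πk (m + 1) x a) + Qtil N r p τ πk (m + 1) x a)) := by
            linarith
        _ = _ := by rw [← mul_sub, hsum]; ring
    calc -∑ x, ν x * Vfun N r p τ πk (m + 1) x
        = ∑ x, -(ν x * Vfun N r p τ πk (m + 1) x) := by
          rw [Finset.sum_neg_distrib]
      _ ≤ ∑ x, (ν x * ∑ a, π (m + 1) x a *
            (-(r (m + 1) x a) + (1 / τ) * Real.log (π (m + 1) x a / πk (m + 1) x a))
          - ν x * ∑ a, π (m + 1) x a *
            ∑ x', p (m + 2) x a x' * Vfun N r p τ πk (m + 2) x') :=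
          Finset.sum_le_sum fun x _ => key x
      _ = (∑ z : X × A, induced μ0 p π (m + 1) z *
            (-(r (m + 1) z.1 z.2) + (1 / τ) * Real.log (π (m + 1) z.1 z.2 / πk (m + 1) z.1 z.2)))
          - ∑ x', (∑ z : X × A, induced μ0 p π (m + 1) z * p (m + 1 + 1) z.1 z.2 x') *
              Vfun N r p τ πk (m + 1 + 1) x' := by
          rw [Finset.sum_sub_distrib, hcost, hnext]
      _ ≤ _ := by linarith

/-- The equality version for the updated policy `πk1`. -/
lemma tail_eq {X A : Type*} [Fintype X] [Fintype A] [Nonempty X] [Nonempty A]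
    {N : ℕ} {p : ℕ → X → A → X → ℝ}
    (hp : ∀ n, 1 ≤ n → n ≤ N → ∀ x a, IsDist (fun x' => p n x a x'))
    {μ0 : X × A → ℝ} (hμ0 : IsDist μ0)
    {r : ℕ → X → A → ℝ} {τ : ℝ} (hτ : 0 < τ) {πk : ℕ → X → A → ℝ}
    (hπkpos : ∀ n x a, 1 ≤ n → n ≤ N → 0 < πk n x a)
    {πk1 : ℕ → X → A → ℝ}
    (hπk1 : πk1 = fun n x a =>
      πk n x a * Real.exp (τ * Qtil N r p τ πk n x a) /
        ∑ a' : A, πk n x a' * Real.exp (τ * Qtil N r p τ πk n x a'))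
    (hπ : ∀ n x, 1 ≤ n → n ≤ N → IsDist (πk1 n x)) :
    ∀ d, d ≤ N →
      -∑ x, (∑ z : X × A, induced μ0 p πk1 (N - d) z * p (N - d + 1) z.1 z.2 x) *
          Vfun N r p τ πk (N - d + 1) x
        = ∑ m ∈ Finset.Icc (N - d + 1) N, ∑ z : X × A, induced μ0 p πk1 m z *
            (-(r m z.1 z.2) + (1 / τ) * Real.log (πk1 m z.1 z.2 / πk m z.1 z.2)) := by
  intro d
  induction d with
  | zero =>
    intro _
    rw [Nat.sub_zero, Finset.Icc_eq_empty (by omega), Finset.sum_empty]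
    have hV : ∀ x : X, Vfun N r p τ πk (N + 1) x = 0 := by
      intro x; rw [Vfun, if_neg (by omega)]
    simp [hV]
  | succ d ih =>
    intro hd
    set m : ℕ := N - (d + 1) with hm
    have hm1 : m + 1 ≤ N := by omega
    have hNd : N - d = m + 1 := by omega
    have IH := ih (by omega)
    rw [hNd] at IH
    rw [Finset.Icc_eq_cons_Ioc (by omega : m + 1 ≤ N), Finset.sum_cons,
      ← Finset.Icc_add_one_left_eq_Ioc]
    set ν : X → ℝ := fun x => ∑ z : X × A, induced μ0 p πk1 m z * p (m + 1) z.1 z.2 x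
      with hν
    have hμ1 : ∀ y : X × A, induced μ0 p πk1 (m + 1) y = ν y.1 * πk1 (m + 1) y.1 y.2 := by
      intro y
      show (∑ z : X × A, induced μ0 p πk1 m z * p (m + 1) z.1 z.2 y.1 * πk1 (m + 1) y.1 y.2)
        = _
      rw [hν, Finset.sum_mul]
    have hcost : ∑ z : X × A, induced μ0 p πk1 (m + 1) z *
        (-(r (m + 1) z.1 z.2) + (1 / τ) * Real.log (πk1 (m + 1) z.1 z.2 / πk (m + 1) z.1 z.2))
        = ∑ x, ν x * ∑ a, πk1 (m + 1) x a *
            (-(r (m + 1) x a) + (1 / τ) * Real.log (πk1 (m + 1) x a / πk (m + 1) x a)) := by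
      rw [Fintype.sum_prod_type]
      refine Finset.sum_congr rfl fun x _ => ?_
      rw [Finset.mul_sum]
      refine Finset.sum_congr rfl fun a _ => ?_
      rw [hμ1 (x, a)]
      ring
    have hnext : ∑ x', (∑ z : X × A, induced μ0 p πk1 (m + 1) z * p (m + 1 + 1) z.1 z.2 x') *
        Vfun N r p τ πk (m + 1 + 1) x'
        = ∑ x, ν x * ∑ a, πk1 (m + 1) x a *
            ∑ x', p (m + 2) x a x' * Vfun N r p τ πk (m + 2) x' := by
      have expand : ∀ x', (∑ z : X × A, induced μ0 p πk1 (m + 1) z * p (m + 1 + 1) z.1 z.2 x')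
          = ∑ x, ∑ a, ν x * πk1 (m + 1) x a * p (m + 2) x a x' := by
        intro x'
        rw [Fintype.sum_prod_type]
        refine Finset.sum_congr rfl fun x _ => Finset.sum_congr rfl fun a _ => ?_
        rw [hμ1 (x, a)]
      calc ∑ x', (∑ z : X × A, induced μ0 p πk1 (m + 1) z * p (m + 1 + 1) z.1 z.2 x') *
            Vfun N r p τ πk (m + 1 + 1) x'
          = ∑ x', ∑ x, ∑ a, ν x * πk1 (m + 1) x a * p (m + 2) x a x' *
              Vfun N r p τ πk (m + 2) x' := by
            refine Finset.sum_congr rfl fun x' _ => ?_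
            rw [expand x', Finset.sum_mul]
            exact Finset.sum_congr rfl fun x _ => by rw [Finset.sum_mul]
        _ = ∑ x, ν x * ∑ a, πk1 (m + 1) x a *
              ∑ x', p (m + 2) x a x' * Vfun N r p τ πk (m + 2) x' := by
            rw [Finset.sum_comm]
            refine Finset.sum_congr rfl fun x _ => ?_
            rw [Finset.sum_comm, Finset.mul_sum]
            refine Finset.sum_congr rfl fun a _ => ?_
            rw [Finset.mul_sum, Finset.mul_sum]
            exact Finset.sum_congr rfl fun x' _ => by ring
    have key : ∀ x, -(ν x * Vfun N r p τ πk (m + 1) x)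
        = ν x * ∑ a, πk1 (m + 1) x a *
            (-(r (m + 1) x a) + (1 / τ) * Real.log (πk1 (m + 1) x a / πk (m + 1) x a))
          - ν x * ∑ a, πk1 (m + 1) x a *
            ∑ x', p (m + 2) x a x' * Vfun N r p τ πk (m + 2) x' := by
      intro x
      have hsum : ∑ a, πk1 (m + 1) x a *
            (-(r (m + 1) x a) + (1 / τ) * Real.log (πk1 (m + 1) x a / πk (m + 1) x a))
          - ∑ a, πk1 (m + 1) x a * ∑ x', p (m + 2) x a x' * Vfun N r p τ πk (m + 2) x'
          = -∑ a, πk1 (m + 1) x a * (-(1 / τ) *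
              Real.log (πk1 (m + 1) x a / πk (m + 1) x a) + Qtil N r p τ πk (m + 1) x a) := by
        rw [← Finset.sum_sub_distrib, ← Finset.sum_neg_distrib]
        refine Finset.sum_congr rfl fun a _ => ?_
        rw [bellman hp hτ hπkpos (m + 1) (by omega) hm1 x a]
        ring
      have hg := Vfun_eq (p := p) (r := r) hτ hπkpos hπk1 (m + 1) (by omega) hm1 x
      rw [← mul_sub, hsum, hg]
      ring
    calc -∑ x, ν x * Vfun N r p τ πk (m + 1) x
        = ∑ x, -(ν x * Vfun N r p τ πk (m + 1) x) := by
          rw [Finset.sum_neg_distrib]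
      _ = ∑ x, (ν x * ∑ a, πk1 (m + 1) x a *
            (-(r (m + 1) x a) + (1 / τ) * Real.log (πk1 (m + 1) x a / πk (m + 1) x a))
          - ν x * ∑ a, πk1 (m + 1) x a *
            ∑ x', p (m + 2) x a x' * Vfun N r p τ πk (m + 2) x') :=
          Finset.sum_congr rfl fun x _ => key x
      _ = (∑ z : X × A, induced μ0 p πk1 (m + 1) z *
            (-(r (m + 1) z.1 z.2) + (1 / τ) * Real.log (πk1 (m + 1) z.1 z.2 / πk (m + 1) z.1 z.2)))
          - ∑ x', (∑ z : X × A, induced μ0 p πk1 (m + 1) z * p (m + 1 + 1) z.1 z.2 x') *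
              Vfun N r p τ πk (m + 1 + 1) x' := by
          rw [Finset.sum_sub_distrib, hcost, hnext]
      _ = _ := by rw [← IH]; ring

/-- Theorem 1 (MD-MFC update): the policy sequence
`π^{k+1}_n(a|x) = π^k_n(a|x)·exp(τ Q̃_n(x,a)) / Σ_{a'} π^k_n(a'|x)·exp(τ Q̃_n(x,a'))`
induces a minimizer, over all state-action distribution sequences `μ^π ∈ M_{μ0}`
(equivalently, over all policy sequences `π`), of the mirror-descent objective
`Σ_{n=1}^N ⟨−r_n, μ^π_n⟩ + (1/τ)·Γ(μ^π, μ^{π^k})`. -/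
theorem md_mfc_update_minimizes {X A : Type*} [Fintype X] [Fintype A]
    [Nonempty X] [Nonempty A]
    (N : ℕ) (hN : 1 ≤ N)
    (p : ℕ → X → A → X → ℝ)
    (hp : ∀ n, 1 ≤ n → n ≤ N → ∀ x a, IsDist (fun x' => p n x a x'))
    (μ0 : X × A → ℝ) (hμ0 : IsDist μ0)
    (r : ℕ → X → A → ℝ)
    (τ : ℝ) (hτ : 0 < τ)
    (πk : ℕ → X → A → ℝ)
    (hπk : ∀ n x, 1 ≤ n → n ≤ N → IsDist (πk n x))
    (hπkpos : ∀ n x a, 1 ≤ n → n ≤ N → 0 < πk n x a)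
    (πk1 : ℕ → X → A → ℝ)
    (hπk1 : πk1 = fun n x a =>
      πk n x a * Real.exp (τ * Qtil N r p τ πk n x a) /
        ∑ a' : A, πk n x a' * Real.exp (τ * Qtil N r p τ πk n x a')) :
    ∀ π : ℕ → X → A → ℝ, (∀ n x, 1 ≤ n → n ≤ N → IsDist (π n x)) →
      (∑ n ∈ Finset.Icc 1 N,
          -∑ z : X × A, r n z.1 z.2 * induced μ0 p πk1 n z) +
        (1 / τ) * ∑ n ∈ Finset.Icc 1 N, ∑ z : X × A,
          induced μ0 p πk1 n z * Real.log (πk1 n z.1 z.2 / πk n z.1 z.2) ≤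
      (∑ n ∈ Finset.Icc 1 N,
          -∑ z : X × A, r n z.1 z.2 * induced μ0 p π n z) +
        (1 / τ) * ∑ n ∈ Finset.Icc 1 N, ∑ z : X × A,
          induced μ0 p π n z * Real.log (π n z.1 z.2 / πk n z.1 z.2) := by
  intro π hπ
  have hπk1dist : ∀ n x, 1 ≤ n → n ≤ N → IsDist (πk1 n x) := by
    intro n x h1 h2
    rw [hπk1]
    exact softmax_isDist (πk n x) (fun a => hπkpos n x a h1 h2) (Qtil N r p τ πk n x)
  have hform : ∀ ρ : ℕ → X → A → ℝ,
      (∑ n ∈ Finset.Icc 1 N, -∑ z : X × A, r n z.1 z.2 * induced μ0 p ρ n z) +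
        (1 / τ) * ∑ n ∈ Finset.Icc 1 N, ∑ z : X × A,
          induced μ0 p ρ n z * Real.log (ρ n z.1 z.2 / πk n z.1 z.2)
      = ∑ n ∈ Finset.Icc 1 N, ∑ z : X × A, induced μ0 p ρ n z *
          (-(r n z.1 z.2) + (1 / τ) * Real.log (ρ n z.1 z.2 / πk n z.1 z.2)) := by
    intro ρ
    rw [Finset.mul_sum, ← Finset.sum_add_distrib]
    refine Finset.sum_congr rfl fun n _ => ?_
    rw [Finset.mul_sum, ← Finset.sum_neg_distrib, ← Finset.sum_add_distrib]
    exact Finset.sum_congr rfl fun z _ => by ring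
  rw [hform π, hform πk1]
  have h0 : ∀ ρ : ℕ → X → A → ℝ, induced μ0 p ρ 0 = μ0 := fun ρ => rfl
  have hge := tail_ge (r := r) hp hμ0 hτ hπkpos hπ N le_rfl
  have heq := tail_eq (r := r) hp hμ0 hτ hπkpos hπk1 hπk1dist N le_rfl
  rw [Nat.sub_self] at hge heq
  simp only [h0] at hge heq
  rw [← heq]
  exact hge
end
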